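/- arXiv:gr-qc/0410070 — 4 statements merged into one kernel-verified Lean document; each statement's English description precedes it below -/
import Mathlib

section
/- Let g be an invertible symmetric real N×N matrix and Q a symmetric real N×N matrix with Q g⁻¹ Q = 0 (the zero matrix). Then there exist integers p, q ≥ 0 and vectors k_1,…,k_{p+q} ∈ ℝ^N which are mutually orthogonal null covectors with respect to g, i.e. k_λᵀ g⁻¹ k_μ = 0 for all 1 ≤ λ, μ ≤ p+q, such that Q = Σ_{λ=1}^{p} k_λ k_λᵀ − Σ_{λ=p+1}^{p+q} k_λ k_λᵀ. -/
open Matrix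

/-- **Corollary B.3** (`cor:vsiq2`): if `g` is an invertible symmetric real `N×N` matrix
and `Q` a symmetric matrix with `Q g⁻¹ Q = 0` (the square of `Q` with one index raised
vanishes), then `Q = Σ_{λ<p} k_λ k_λᵀ − Σ_{p≤λ<p+q} k_λ k_λᵀ` for a collection of
mutually orthogonal null covectors `k_λ`, i.e. `k_λᵀ g⁻¹ k_μ = 0` for all `λ, μ`. -/
theorem vsi_q_squared_zero (N : ℕ) (g Q : Matrix (Fin N) (Fin N) ℝ)
    (hgsymm : g.IsSymm) (hginv : IsUnit g.det) (hQsymm : Q.IsSymm)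
    (hQ2 : Q * g⁻¹ * Q = 0) :
    ∃ (p q : ℕ) (k : Fin (p + q) → (Fin N → ℝ)),
      (∀ l m : Fin (p + q), k l ⬝ᵥ g⁻¹ *ᵥ k m = 0) ∧
      Q = (∑ l : Fin (p + q),
            (if (l : ℕ) < p then (1 : ℝ) else -1) • vecMulVec (k l) (k l)) := by
  have hQh : Q.IsHermitian := by
    rwa [IsHermitian, conjTranspose_eq_transpose_of_trivial]
  set lam := hQh.eigenvalues with hlam
  set v : Fin N → (Fin N → ℝ) := fun j => ⇑(hQh.eigenvectorBasis j) with hv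
  -- eigenvector property
  have heig : ∀ j, Q *ᵥ v j = lam j • v j := fun j => hQh.mulVec_eigenvectorBasis j
  -- decomposition of Q
  have hdecomp : Q = ∑ j, lam j • vecMulVec (v j) (v j) := by
    conv_lhs => rw [hQh.spectral_theorem]
    ext i j
    simp [mul_apply, diagonal, vecMulVec_apply, Matrix.sum_apply, Unitary.conjStarAlgAut_apply,
      hv, hlam, mul_comm, mul_assoc, mul_left_comm]
  -- kernel property
  have hker : ∀ j, lam j ≠ 0 → Q *ᵥ (g⁻¹ *ᵥ v j) = 0 := by
    intro j hj
    have h1 : (Q * g⁻¹ * Q) *ᵥ v j = 0 := by rw [hQ2, zero_mulVec]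
    have h2 : (Q * g⁻¹ * Q) *ᵥ v j = lam j • (Q *ᵥ (g⁻¹ *ᵥ v j)) := by
      rw [← mulVec_mulVec, heig, mulVec_smul, ← mulVec_mulVec]
    rw [h2] at h1
    exact (smul_eq_zero.mp h1).resolve_left hj
  -- orthogonality
  have horth : ∀ i j : Fin N, lam i ≠ 0 → lam j ≠ 0 → v i ⬝ᵥ g⁻¹ *ᵥ v j = 0 := by
    intro i j hi hj
    have h1 : lam i * (v i ⬝ᵥ g⁻¹ *ᵥ v j) = (Q *ᵥ v i) ⬝ᵥ (g⁻¹ *ᵥ v j) := by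
      rw [heig]; simp [smul_dotProduct]
    have h2 : (Q *ᵥ v i) ⬝ᵥ (g⁻¹ *ᵥ v j) = v i ⬝ᵥ (Q *ᵥ (g⁻¹ *ᵥ v j)) := by
      rw [dotProduct_comm, dotProduct_mulVec, ← mulVec_transpose, hQsymm.eq,
        dotProduct_comm]
    rw [h2, hker j hj, dotProduct_zero] at h1
    exact (mul_eq_zero.mp h1).resolve_left hi
  -- construct the k's
  set idx : Fin (N + N) → Fin N := fun l =>
    if h : (l : ℕ) < N then ⟨l, h⟩ else ⟨(l : ℕ) - N, by omega⟩ with hidx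
  set c : Fin (N + N) → ℝ := fun l =>
    if (l : ℕ) < N then Real.sqrt (lam (idx l) ⊔ 0)
    else Real.sqrt (-(lam (idx l)) ⊔ 0) with hc
  refine ⟨N, N, fun l => c l • v (idx l), ?_, ?_⟩
  · -- orthogonality of the k's
    intro l m
    have hcz : ∀ l' : Fin (N + N), c l' ≠ 0 → lam (idx l') ≠ 0 := by
      intro l' h hz
      apply h
      by_cases h' : (l' : ℕ) < N
      · rw [hc]; simp only [if_pos h', hz]; simp
      · rw [hc]; simp only [if_neg h', hz]; simp
    show (c l • v (idx l)) ⬝ᵥ g⁻¹ *ᵥ (c m • v (idx m)) = 0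
    rw [mulVec_smul, smul_dotProduct, dotProduct_smul]
    by_cases h1 : c l = 0
    · simp [h1]
    by_cases h2 : c m = 0
    · simp [h2]
    rw [horth _ _ (hcz l h1) (hcz m h2)]
    simp
  · -- the decomposition
    rw [hdecomp]
    have hvv : ∀ (a : ℝ) (x : Fin N → ℝ),
        vecMulVec (a • x) (a • x) = (a * a) • vecMulVec x x := by
      intro a x; ext i j; simp [vecMulVec_apply]; ring
    have step : ∀ l : Fin (N + N),
        (if (l : ℕ) < N then (1 : ℝ) else -1) •
            vecMulVec (c l • v (idx l)) (c l • v (idx l))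
          = ((if (l : ℕ) < N then (1 : ℝ) else -1) * (c l * c l)) •
            vecMulVec (v (idx l)) (v (idx l)) := by
      intro l; rw [hvv, smul_smul]
    simp only [step]
    rw [Fin.sum_univ_add]
    have e1 : ∀ i : Fin N, idx (Fin.castAdd N i) = i := by
      intro i
      have h : ((Fin.castAdd N i : Fin (N + N)) : ℕ) < N := by simp [i.isLt]
      rw [hidx]; simp only [dif_pos h]
      apply Fin.ext; simp
    have e2 : ∀ i : Fin N, idx (Fin.natAdd N i) = i := by
      intro i
      have h : ¬ ((Fin.natAdd N i : Fin (N + N)) : ℕ) < N := by simp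
      rw [hidx]; simp only [dif_neg h]
      apply Fin.ext; simp
    have hA : ∀ i : Fin N,
        (if ((Fin.castAdd N i : Fin (N + N)) : ℕ) < N then (1 : ℝ) else -1) *
          (c (Fin.castAdd N i) * c (Fin.castAdd N i)) = lam i ⊔ 0 := by
      intro i
      have h : ((Fin.castAdd N i : Fin (N + N)) : ℕ) < N := by simp [i.isLt]
      rw [if_pos h, one_mul, hc]
      simp only [if_pos h, e1]
      exact Real.mul_self_sqrt (le_max_right _ _)
    have hB : ∀ i : Fin N,
        (if ((Fin.natAdd N i : Fin (N + N)) : ℕ) < N then (1 : ℝ) else -1) *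
          (c (Fin.natAdd N i) * c (Fin.natAdd N i)) = -(-(lam i) ⊔ 0) := by
      intro i
      have h : ¬ ((Fin.natAdd N i : Fin (N + N)) : ℕ) < N := by simp
      rw [if_neg h, hc]
      simp only [if_neg h, e2]
      rw [Real.mul_self_sqrt (le_max_right _ _)]
      ring
    have sumA : (∑ i : Fin N,
        ((if ((Fin.castAdd N i : Fin (N + N)) : ℕ) < N then (1 : ℝ) else -1) *
          (c (Fin.castAdd N i) * c (Fin.castAdd N i))) •
            vecMulVec (v (idx (Fin.castAdd N i))) (v (idx (Fin.castAdd N i))))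
        = ∑ i : Fin N, (lam i ⊔ 0) • vecMulVec (v i) (v i) :=
      Finset.sum_congr rfl fun i _ => by rw [e1, hA]
    have sumB : (∑ i : Fin N,
        ((if ((Fin.natAdd N i : Fin (N + N)) : ℕ) < N then (1 : ℝ) else -1) *
          (c (Fin.natAdd N i) * c (Fin.natAdd N i))) •
            vecMulVec (v (idx (Fin.natAdd N i))) (v (idx (Fin.natAdd N i))))
        = ∑ i : Fin N, (-(-(lam i) ⊔ 0)) • vecMulVec (v i) (v i) :=
      Finset.sum_congr rfl fun i _ => by rw [e2, hB]
    rw [sumA, sumB, ← Finset.sum_add_distrib]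
    refine Finset.sum_congr rfl fun i _ => ?_
    rw [← add_smul]
    congr 1
    rcases le_total (lam i) 0 with h | h
    · rw [max_eq_right h, max_eq_left (by linarith)]; ring
    · rw [max_eq_left h, max_eq_right (by linarith)]; ring
end

section
/- Let g be a symmetric real N×N matrix of Lorentz signature (N−1 positive and 1 negative square) and Q a symmetric real N×N matrix such that g⁻¹Q is nilpotent. Then exactly one of the following holds: (i) Q = 0; (ii) there is a nonzero vector ℓ ∈ ℝ^N with ℓᵀ g⁻¹ ℓ = 0 such that Q = ℓℓᵀ or Q = −ℓℓᵀ; (iii) there are vectors ℓ, m ∈ ℝ^N with ℓ ≠ 0, ℓᵀ g⁻¹ ℓ = 0, mᵀ g⁻¹ m = 1, ℓᵀ g⁻¹ m = 0, such that Q = (ℓmᵀ + mℓᵀ)/2. -/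
open Matrix

/-- The standard Minkowski diagonal matrix `diag(1,…,1,−1)` (N−1 positive squares,
one negative square). -/
def minkDiag (N : ℕ) : Matrix (Fin N) (Fin N) ℝ :=
  Matrix.diagonal (fun i => if (i : ℕ) + 1 < N then 1 else -1)

/-- The symmetrized outer product of two column vectors: `x ⊙ y = (x yᵀ + y xᵀ)/2`. -/
noncomputable def symOuter {N : ℕ} (x y : Fin N → ℝ) : Matrix (Fin N) (Fin N) ℝ :=
  (1 / 2 : ℝ) • (vecMulVec x y + vecMulVec y x)



section PNAux
variable {N : ℕ}

lemma minkdot (n : ℕ) (v w : Fin (n+1) → ℝ) :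
    v ⬝ᵥ minkDiag (n+1) *ᵥ w =
      (∑ i : Fin n, v i.castSucc * w i.castSucc) - v (Fin.last n) * w (Fin.last n) := by
  have : ∀ i : Fin (n+1), (minkDiag (n+1) *ᵥ w) i = (if (i:ℕ)+1 < n+1 then 1 else -1) * w i := by
    intro i
    simp [minkDiag, mulVec_diagonal]
  simp only [dotProduct, this]
  rw [Fin.sum_univ_castSucc]
  have h1 : ∀ i : Fin n, ((i.castSucc : ℕ)+1 < n+1) := by
    intro i; simpa using i.isLt
  have h2 : ¬ (((Fin.last n : Fin (n+1)) : ℕ)+1 < n+1) := by simp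
  rw [if_neg h2]
  have : ∀ i : Fin n, v i.castSucc * ((if ((i.castSucc:ℕ))+1 < n+1 then (1:ℝ) else -1) * w i.castSucc)
      = v i.castSucc * w i.castSucc := by
    intro i; rw [if_pos (h1 i)]; ring
  rw [Finset.sum_congr rfl (fun i _ => this i)]
  ring

lemma sum_sq_zero {n : ℕ} (z : Fin n → ℝ) (h : ∑ i, z i ^ 2 = 0) : ∀ i, z i = 0 := by
  intro i
  have := (Finset.sum_eq_zero_iff_of_nonneg (fun j _ => sq_nonneg (z j))).mp h i (Finset.mem_univ i)
  exact pow_eq_zero_iff (by norm_num) |>.mp this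

end PNAux

section PNAux
variable {N : ℕ}

lemma L1eta {N : ℕ} (v w : Fin N → ℝ) (hv : v ⬝ᵥ minkDiag N *ᵥ v = 0)
    (hw : w ⬝ᵥ minkDiag N *ᵥ w = 0) (hvw : v ⬝ᵥ minkDiag N *ᵥ w = 0) :
    v = 0 ∨ ∃ c : ℝ, w = c • v := by
  cases N with
  | zero => left; funext i; exact i.elim0
  | succ n =>
    rw [minkdot] at hv hw hvw
    set x : Fin n → ℝ := fun i => v i.castSucc with hx
    set y : Fin n → ℝ := fun i => w i.castSucc with hy
    set t := v (Fin.last n) with ht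
    set s := w (Fin.last n) with hs
    have hv' : ∑ i, x i * x i = t * t := by linarith
    have hw' : ∑ i, y i * y i = s * s := by linarith
    have hvw' : ∑ i, x i * y i = t * s := by linarith
    have hz : ∑ i, (s * x i - t * y i) ^ 2 = 0 := by
      have : ∀ i : Fin n, (s * x i - t * y i) ^ 2
          = s^2 * (x i * x i) - 2*s*t*(x i * y i) + t^2*(y i * y i) := by intro i; ring
      rw [Finset.sum_congr rfl (fun i _ => this i)]
      rw [Finset.sum_add_distrib, Finset.sum_sub_distrib, ← Finset.mul_sum, ← Finset.mul_sum,
        ← Finset.mul_sum, hv', hw', hvw']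
      ring
    have hz0 := sum_sq_zero _ hz
    by_cases htz : t = 0
    · left
      have hx0 : ∑ i, x i * x i = 0 := by rw [hv', htz]; ring
      have : ∀ i, x i = 0 := by
        intro i
        have := sum_sq_zero x (by rw [← hx0]; exact Finset.sum_congr rfl (fun i _ => sq (x i) ▸ (sq (x i)).symm ▸ (pow_two (x i))) ) 
        exact this i
      funext j
      refine Fin.lastCases ?_ ?_ j
      · simpa using htz
      · intro i; simpa using this i
    · right
      refine ⟨s / t, ?_⟩
      funext j
      refine Fin.lastCases ?_ ?_ j
      · show s = (s/t) * t
        field_simp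
      · intro i
        show y i = (s/t) * x i
        have h' : s * x i = t * y i := by linarith [hz0 i]
        field_simp
        linarith

lemma L2eta {N : ℕ} (p v : Fin N → ℝ) (hp : p ⬝ᵥ minkDiag N *ᵥ p < 0)
    (hpv : p ⬝ᵥ minkDiag N *ᵥ v = 0) (hv : v ⬝ᵥ minkDiag N *ᵥ v ≤ 0) :
    v = 0 := by
  cases N with
  | zero => funext i; exact i.elim0
  | succ n =>
    rw [minkdot] at hp hpv hv
    set x : Fin n → ℝ := fun i => p i.castSucc with hx
    set y : Fin n → ℝ := fun i => v i.castSucc with hy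
    set t := p (Fin.last n) with ht
    set s := v (Fin.last n) with hs
    have hp' : ∑ i, x i * x i < t * t := by linarith
    have hv' : ∑ i, y i * y i ≤ s * s := by linarith
    have hpv' : ∑ i, x i * y i = t * s := by linarith
    have hxnn : (0:ℝ) ≤ ∑ i, x i * x i :=
      Finset.sum_nonneg (fun i _ => mul_self_nonneg _)
    have htne : t ≠ 0 := by
      intro h0; rw [h0] at hp'; nlinarith
    have hz : ∑ i, (t * y i - s * x i) ^ 2 ≤ 0 := by
      have : ∀ i : Fin n, (t * y i - s * x i) ^ 2
          = t^2 * (y i * y i) - 2*s*t*(x i * y i) + s^2*(x i * x i) := by intro i; ring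
      rw [Finset.sum_congr rfl (fun i _ => this i)]
      rw [Finset.sum_add_distrib, Finset.sum_sub_distrib, ← Finset.mul_sum, ← Finset.mul_sum,
        ← Finset.mul_sum, hpv']
      nlinarith [sq_nonneg s, sq_nonneg t, hv', hp']
    have hz0 : ∑ i, (t * y i - s * x i) ^ 2 = 0 :=
      le_antisymm hz (Finset.sum_nonneg (fun i _ => sq_nonneg _))
    have hzi := sum_sq_zero _ hz0
    have hty : ∀ i, t * y i = s * x i := by
      intro i
      linarith [hzi i]
    by_cases hsz : s = 0
    · have hy0 : ∀ i, y i = 0 := by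
        intro i
        have := hty i
        rw [hsz] at this
        have : t * y i = 0 := by linarith
        exact (mul_eq_zero.mp this).resolve_left htne
      funext j
      refine Fin.lastCases ?_ ?_ j
      · simpa using hsz
      · intro i; simpa using hy0 i
    · exfalso
      have h1 : t * ∑ i, x i * y i = s * ∑ i, x i * x i := by
        rw [Finset.mul_sum, Finset.mul_sum]
        refine Finset.sum_congr rfl (fun i _ => ?_)
        linear_combination x i * (hty i)
      rw [hpv'] at h1
      have h2 : ∑ i, x i * x i = t * t := by
        have h3 : s * (∑ i, x i * x i) = s * (t * t) := by linarith
        exact mul_left_cancel₀ hsz h3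
      linarith

end PNAux

section PNAux
variable {N : ℕ}

lemma mul_vmv (M : Matrix (Fin N) (Fin N) ℝ) (a b : Fin N → ℝ) :
    M * vecMulVec a b = vecMulVec (M *ᵥ a) b := by
  ext i j
  simp [mul_apply, vecMulVec_apply, mulVec, dotProduct, Finset.sum_mul, mul_assoc]

lemma vmv_mul (M : Matrix (Fin N) (Fin N) ℝ) (a b : Fin N → ℝ) :
    vecMulVec a b * M = vecMulVec a (Mᵀ *ᵥ b) := by
  ext i j
  simp [mul_apply, vecMulVec_apply, mulVec, dotProduct, Finset.mul_sum, transpose_apply]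
  congr 1; ext k; ring

lemma vmv_eq_zero_iff (a b : Fin N → ℝ) : vecMulVec a b = 0 ↔ a = 0 ∨ b = 0 := by
  constructor
  · intro h
    by_cases ha : a = 0
    · exact Or.inl ha
    · right
      obtain ⟨i, hi⟩ := Function.ne_iff.mp ha
      funext j
      have := congrFun (congrFun h i) j
      simp [vecMulVec_apply] at this
      rcases this with h1 | h1
      · exact absurd h1 hi
      · exact h1
  · rintro (h | h) <;> subst h <;> ext i j <;> simp [vecMulVec_apply]

lemma dot_transfer (P η : Matrix (Fin N) (Fin N) ℝ) (v w : Fin N → ℝ) :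
    v ⬝ᵥ (P * η * Pᵀ) *ᵥ w = (Pᵀ *ᵥ v) ⬝ᵥ η *ᵥ (Pᵀ *ᵥ w) := by
  rw [← mulVec_mulVec, ← mulVec_mulVec, dotProduct_mulVec, ← transpose_transpose P, vecMul_transpose, transpose_transpose]

end PNAux

section PNAux
variable {N : ℕ}

lemma col_dot (S h : Matrix (Fin N) (Fin N) ℝ) (i j : Fin N) :
    (fun a => S a i) ⬝ᵥ h *ᵥ (fun b => S b j) = (Sᵀ * h * S) i j := by
  simp only [mul_apply, mulVec, dotProduct, transpose_apply, Finset.mul_sum, Finset.sum_mul]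
  rw [Finset.sum_comm]
  congr 1; ext a
  congr 1; ext b
  ring

lemma smul_dot_smul (h : Matrix (Fin N) (Fin N) ℝ) (a b : ℝ) (c d : Fin N → ℝ) :
    (a • c) ⬝ᵥ h *ᵥ (b • d) = (a * b) * (c ⬝ᵥ h *ᵥ d) := by
  rw [smul_dotProduct, mulVec_smul, dotProduct_smul]
  simp [smul_smul, mul_assoc]

lemma rankOne (h S : Matrix (Fin N) (Fin N) ℝ)
    (T1 : ∀ v w : Fin N → ℝ, v ⬝ᵥ h *ᵥ v = 0 → w ⬝ᵥ h *ᵥ w = 0 → v ⬝ᵥ h *ᵥ w = 0 →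
      v = 0 ∨ ∃ c : ℝ, w = c • v)
    (hS : Sᵀ = S) (hS0 : S ≠ 0) (hn : S * h * S = 0) :
    ∃ ℓ : Fin N → ℝ, ℓ ≠ 0 ∧ ℓ ⬝ᵥ h *ᵥ ℓ = 0 ∧
      (S = vecMulVec ℓ ℓ ∨ S = -vecMulVec ℓ ℓ) := by
  have coldot : ∀ i j : Fin N, (fun a => S a i) ⬝ᵥ h *ᵥ (fun b => S b j) = 0 := by
    intro i j
    rw [col_dot, hS, hn]
    rfl
  obtain ⟨i0, j0, hij⟩ : ∃ i j, S i j ≠ 0 := by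
    by_contra hcon
    push_neg at hcon
    exact hS0 (by ext i j; simpa using hcon i j)
  set c : Fin N → ℝ := fun a => S a j0 with hc
  have hcne : c ≠ 0 := fun h0 => hij (by simpa [hc] using congrFun h0 i0)
  have hlam : ∀ j : Fin N, ∃ lam : ℝ, (fun a => S a j) = lam • c := by
    intro j
    exact (T1 c (fun a => S a j) (coldot j0 j0) (coldot j j) (coldot j0 j)).resolve_left hcne
  choose lam hlamspec using hlam
  have hSl : ∀ i j : Fin N, S i j = lam j * c i := by
    intro i j
    have := congrFun (hlamspec j) i
    simpa using this
  obtain ⟨i1, hi1⟩ := Function.ne_iff.mp hcne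
  have hi1' : c i1 ≠ 0 := by simpa using hi1
  set μ : ℝ := lam i1 / c i1 with hmu
  have hlam' : ∀ j : Fin N, lam j = μ * c j := by
    intro j
    have hsymm : S i1 j = S j i1 := by
      have := congrFun (congrFun hS j) i1
      simpa [transpose_apply] using this
    rw [hSl i1 j, hSl j i1] at hsymm
    rw [hmu, div_mul_eq_mul_div, eq_div_iff hi1']
    linarith
  have hSmu : ∀ i j : Fin N, S i j = μ * c i * c j := by
    intro i j
    rw [hSl i j, hlam' j]; ring
  have hmune : μ ≠ 0 := by
    intro h0
    apply hij
    rw [hSmu i0 j0, h0]; ring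
  have hcnull : c ⬝ᵥ h *ᵥ c = 0 := coldot j0 j0
  rcases lt_or_gt_of_ne hmune with hneg | hpos
  · refine ⟨Real.sqrt (-μ) • c, ?_, ?_, Or.inr ?_⟩
    · intro h0
      have h1 : Real.sqrt (-μ) ≠ 0 := by
        simp [Real.sqrt_ne_zero']; linarith
      apply hcne
      funext a
      have := congrFun h0 a
      simp at this
      rcases this with h2 | h2
      · exact absurd h2 h1
      · simpa using h2
    · rw [smul_dot_smul, hcnull]; ring
    · ext i j
      simp only [vecMulVec_apply, Matrix.neg_apply, Pi.smul_apply, smul_eq_mul]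
      rw [hSmu i j]
      have h2 : Real.sqrt (-μ) * Real.sqrt (-μ) = -μ := Real.mul_self_sqrt (by linarith)
      linear_combination (c i * c j) * h2
  · refine ⟨Real.sqrt μ • c, ?_, ?_, Or.inl ?_⟩
    · intro h0
      have h1 : Real.sqrt μ ≠ 0 := by
        simp [Real.sqrt_ne_zero']; linarith
      apply hcne
      funext a
      have := congrFun h0 a
      simp at this
      rcases this with h2 | h2
      · exact absurd h2 h1
      · simpa using h2
    · rw [smul_dot_smul, hcnull]; ring
    · ext i j
      simp only [vecMulVec_apply, Pi.smul_apply, smul_eq_mul]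
      rw [hSmu i j]
      have h2 : Real.sqrt μ * Real.sqrt μ = μ := Real.mul_self_sqrt (by linarith)
      linear_combination (-(c i * c j)) * h2

end PNAux

section PNAux
variable {N : ℕ}

lemma powz_le {A : Matrix (Fin N) (Fin N) ℝ} {m n : ℕ} (hmn : m ≤ n)
    (h : A ^ m = 0) : A ^ n = 0 := by
  have : A ^ n = A ^ m * A ^ (n - m) := by rw [← pow_add]; congr 1; omega
  rw [this, h, zero_mul]

lemma symm_pow (h Q : Matrix (Fin N) (Fin N) ℝ) (hh : hᵀ = h) (hQ : Qᵀ = Q) (m : ℕ) :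
    (Q * (h * Q) ^ m)ᵀ = Q * (h * Q) ^ m := by
  induction m with
  | zero => simpa using hQ
  | succ m ih =>
    have e : Q * (h * Q) ^ (m+1) = (Q * (h * Q) ^ m) * (h * Q) := by rw [pow_succ, mul_assoc]
    rw [e, transpose_mul, transpose_mul, hh, hQ, ih]
    rw [mul_assoc Q h, ← mul_assoc h Q, ← pow_succ']
    rw [mul_assoc, ← pow_succ]

lemma eigen_pow (A : Matrix (Fin N) (Fin N) ℝ) (x : Fin N → ℝ) (c : ℝ)
    (hx : A *ᵥ x = c • x) (k : ℕ) : A ^ k *ᵥ x = c ^ k • x := by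
  induction k with
  | zero => simp
  | succ k ih =>
    rw [pow_succ', ← mulVec_mulVec, ih, mulVec_smul, hx, smul_smul, ← pow_succ]

lemma step_lemma (h g' Q : Matrix (Fin N) (Fin N) ℝ)
    (hh : hᵀ = h) (hQ : Qᵀ = Q) (hhg : h * g' = 1) (hgh : g' * h = 1)
    (T1 : ∀ v w : Fin N → ℝ, v ⬝ᵥ h *ᵥ v = 0 → w ⬝ᵥ h *ᵥ w = 0 → v ⬝ᵥ h *ᵥ w = 0 →
      v = 0 ∨ ∃ c : ℝ, w = c • v)
    (k : ℕ) (hk : 4 ≤ k) (h0 : (h * Q) ^ k = 0) : (h * Q) ^ (k - 1) = 0 := by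
  by_contra hne
  set A := h * Q with hA
  set j := (k + 1) / 2 with hj
  have hj2 : 2 ≤ j := by omega
  have hk2j : k ≤ 2 * j := by omega
  have hjk2 : j ≤ k - 2 := by omega
  set S := Q * A ^ (j - 1) with hS
  have hSsymm : Sᵀ = S := symm_pow h Q hh hQ (j - 1)
  have hAS : h * S = A ^ j := by
    rw [hS, ← mul_assoc]
    show A * A ^ (j - 1) = A ^ j
    rw [← pow_succ']; congr 1; omega
  have hA2j : A ^ (2 * j) = 0 := powz_le hk2j h0
  have hQA : Q * A ^ (2 * j - 1) = 0 := by
    have e1 : h * (Q * A ^ (2 * j - 1)) = A ^ (2 * j) := by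
      rw [← mul_assoc]
      show A * A ^ (2 * j - 1) = A ^ (2 * j)
      rw [← pow_succ']; congr 1; omega
    have := congrArg (fun M => g' * M) e1
    simpa [← mul_assoc, hgh, hA2j] using this
  have hSn : S * h * S = 0 := by
    have e2 : S * h * S = Q * (A ^ (j - 1) * (h * S)) := by
      rw [hS, mul_assoc, mul_assoc]
    rw [e2, hAS, ← pow_add]
    have e3 : j - 1 + j = 2 * j - 1 := by omega
    rw [e3, hQA]
  have hSne : S ≠ 0 := by
    intro hS0
    have hAj : A ^ j = 0 := by rw [← hAS, hS0, mul_zero]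
    exact hne (by
      have : A ^ (k - 1) = A ^ (k - 1 - j) * A ^ j := by rw [← pow_add]; congr 1; omega
      rw [this, hAj, mul_zero])
  obtain ⟨ℓ, hl0, hlnull, hScases⟩ := rankOne h S T1 hSsymm hSne hSn
  have hAj1ne : A ^ (j + 1) ≠ 0 := by
    intro hz
    exact hne (by
      have : A ^ (k - 1) = A ^ (k - 1 - (j+1)) * A ^ (j + 1) := by rw [← pow_add]; congr 1; omega
      rw [this, hz, mul_zero])
  have hkey : ∀ i j', (A *ᵥ (h *ᵥ ℓ)) i * ℓ j' = (h *ᵥ ℓ) i * ((Aᵀ) *ᵥ ℓ) j' := by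
    have e1 : A ^ (j + 1) = A * (h * S) := by rw [hAS, ← pow_succ']
    have e2 : A ^ (j + 1) = (h * S) * A := by rw [hAS, ← pow_succ]
    intro i j'
    rcases hScases with hSc | hSc
    · have E : A * (h * vecMulVec ℓ ℓ) = (h * vecMulVec ℓ ℓ) * A := by
        rw [← hSc, ← e1, e2]
      rw [mul_vmv h, mul_vmv A, vmv_mul] at E
      have := congrFun (congrFun E i) j'
      simpa [vecMulVec_apply] using this
    · have E : A * (h * vecMulVec ℓ ℓ) = (h * vecMulVec ℓ ℓ) * A := by
        have E0 : A * (h * S) = (h * S) * A := by rw [← e1, e2]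
        rw [hSc] at E0
        simp only [mul_neg, neg_mul] at E0
        exact neg_injective E0
      rw [mul_vmv h, mul_vmv A, vmv_mul] at E
      have := congrFun (congrFun E i) j'
      simpa [vecMulVec_apply] using this
  obtain ⟨jj, hjj⟩ := Function.ne_iff.mp hl0
  have hjj' : ℓ jj ≠ 0 := by simpa using hjj
  set cc := ((Aᵀ) *ᵥ ℓ) jj / ℓ jj with hcc
  have hx : A *ᵥ (h *ᵥ ℓ) = cc • (h *ᵥ ℓ) := by
    funext i
    have hk1 := hkey i jj
    show (A *ᵥ (h *ᵥ ℓ)) i = cc * (h *ᵥ ℓ) i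
    rw [hcc, div_mul_eq_mul_div, eq_div_iff hjj']
    linarith [hk1]
  have hxne : h *ᵥ ℓ ≠ 0 := by
    intro hz
    apply hl0
    have : (g' * h) *ᵥ ℓ = 0 := by rw [← mulVec_mulVec, hz, mulVec_zero]
    simpa [hgh] using this
  have hcz : cc = 0 := by
    have hk0 : A ^ k *ᵥ (h *ᵥ ℓ) = cc ^ k • (h *ᵥ ℓ) := eigen_pow A _ cc hx k
    rw [h0] at hk0
    simp only [zero_mulVec] at hk0
    by_contra hcne
    apply hxne
    have : (cc ^ k)⁻¹ • (cc ^ k • (h *ᵥ ℓ)) = 0 := by rw [← hk0]; simp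
    rwa [smul_smul, inv_mul_cancel₀ (pow_ne_zero _ hcne), one_smul] at this
  -- now A^(j+1) = ± vecMulVec ((A*h) *ᵥ ℓ) ℓ = 0
  apply hAj1ne
  have e1 : A ^ (j + 1) = A * (h * S) := by rw [hAS, ← pow_succ']
  have hu0 : A *ᵥ (h *ᵥ ℓ) = 0 := by rw [hx, hcz, zero_smul]
  rcases hScases with hSc | hSc
  · rw [e1, hSc, mul_vmv h, mul_vmv A, hu0]
    ext i j'; simp [vecMulVec_apply]
  · rw [e1, hSc]
    simp only [mul_neg]
    rw [mul_vmv h, mul_vmv A, hu0]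
    ext i j'; simp [vecMulVec_apply]

lemma idx3 (h g' Q : Matrix (Fin N) (Fin N) ℝ)
    (hh : hᵀ = h) (hQ : Qᵀ = Q) (hhg : h * g' = 1) (hgh : g' * h = 1)
    (T1 : ∀ v w : Fin N → ℝ, v ⬝ᵥ h *ᵥ v = 0 → w ⬝ᵥ h *ᵥ w = 0 → v ⬝ᵥ h *ᵥ w = 0 →
      v = 0 ∨ ∃ c : ℝ, w = c • v)
    (k : ℕ) : (h * Q) ^ k = 0 → (h * Q) ^ 3 = 0 := by
  induction k using Nat.strong_induction_on with
  | _ k ih =>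
    intro h0
    by_cases h4 : 4 ≤ k
    · exact ih (k - 1) (by omega) (step_lemma h g' Q hh hQ hhg hgh T1 k h4 h0)
    · exact powz_le (by omega) h0

end PNAux

section PNAux
variable {N : ℕ}

lemma vmv_transpose (a b : Fin N → ℝ) : (vecMulVec a b)ᵀ = vecMulVec b a := by
  ext i j; simp [vecMulVec_apply, transpose_apply, mul_comm]

lemma vmv_mulVec (a b u : Fin N → ℝ) : vecMulVec a b *ᵥ u = (b ⬝ᵥ u) • a := by
  funext i
  simp only [mulVec, vecMulVec_apply, dotProduct, Pi.smul_apply, smul_eq_mul]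
  rw [Finset.sum_mul]
  exact Finset.sum_congr rfl fun x _ => by ring

lemma vmv_mul_vmv (a b c d : Fin N → ℝ) :
    vecMulVec a b * vecMulVec c d = (b ⬝ᵥ c) • vecMulVec a d := by
  ext i j
  simp only [mul_apply, vecMulVec_apply, Matrix.smul_apply, smul_eq_mul, dotProduct, Finset.sum_mul]
  exact Finset.sum_congr rfl fun x _ => by ring

lemma dot_mulVec_left (M : Matrix (Fin N) (Fin N) ℝ) (a b : Fin N → ℝ) :
    (M *ᵥ a) ⬝ᵥ b = a ⬝ᵥ (Mᵀ *ᵥ b) := by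
  conv_rhs => rw [dotProduct_mulVec, vecMul_transpose]

lemma dot_symm' (h : Matrix (Fin N) (Fin N) ℝ) (hh : hᵀ = h) (a b : Fin N → ℝ) :
    a ⬝ᵥ h *ᵥ b = b ⬝ᵥ h *ᵥ a := by
  conv_lhs => rw [← hh]
  rw [← dot_mulVec_left, dotProduct_comm]

lemma trip (h : Matrix (Fin N) (Fin N) ℝ) (hh : hᵀ = h) (a b c d : Fin N → ℝ) :
    vecMulVec a b * h * vecMulVec c d = (b ⬝ᵥ h *ᵥ c) • vecMulVec a d := by
  rw [vmv_mul, hh, vmv_mul_vmv, dot_mulVec_left, hh]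

lemma symOuter_contract (h : Matrix (Fin N) (Fin N) ℝ) (hh : hᵀ = h) (l m : Fin N → ℝ)
    (hll : l ⬝ᵥ h *ᵥ l = 0) (hmm : m ⬝ᵥ h *ᵥ m = 1) (hlm : l ⬝ᵥ h *ᵥ m = 0) :
    symOuter l m * h * symOuter l m = (1/4 : ℝ) • vecMulVec l l := by
  have hml : m ⬝ᵥ h *ᵥ l = 0 := by rw [dot_symm' h hh]; exact hlm
  rw [symOuter]
  rw [smul_mul_assoc, smul_mul_assoc, mul_smul_comm, smul_smul]
  have expand : (vecMulVec l m + vecMulVec m l) * h * (vecMulVec l m + vecMulVec m l)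
      = vecMulVec l m * h * vecMulVec l m + vecMulVec l m * h * vecMulVec m l
        + vecMulVec m l * h * vecMulVec l m + vecMulVec m l * h * vecMulVec m l := by
    noncomm_ring
  rw [expand]
  rw [trip h hh l m l m, trip h hh l m m l, trip h hh m l l m, trip h hh m l m l]
  rw [hml, hmm, hll, hlm]
  simp only [zero_smul, one_smul, add_zero, zero_add, smul_smul]
  congr 1
  norm_num

end PNAux

/-- **Corollary B.4** (`cor:pnform`): for a Lorentz-signature metric `g` (i.e. `g` is
symmetric and congruent to `diag(1,…,1,−1)`) and a symmetric matrix `Q` with `g⁻¹Q`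
nilpotent (vanishing zeroth-order invariants), exactly one of the following holds:
(i) `Q = 0`; (ii) `Q = ±ℓℓᵀ` with `ℓ ≠ 0` null; (iii) `Q = (ℓmᵀ + mℓᵀ)/2` with
`ℓ ≠ 0` null and `m` a unit spacelike covector orthogonal to `ℓ`. -/


theorem pn_form_lorentz (N : ℕ) (g Q : Matrix (Fin N) (Fin N) ℝ)
    (hgsymm : g.IsSymm)
    (hsig : ∃ P : Matrix (Fin N) (Fin N) ℝ, IsUnit P.det ∧ Pᵀ * g * P = minkDiag N)
    (hQsymm : Q.IsSymm) (hnil : IsNilpotent (g⁻¹ * Q)) :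
    ((Q = 0) ∧
      ¬(∃ l : Fin N → ℝ, l ≠ 0 ∧ l ⬝ᵥ g⁻¹ *ᵥ l = 0 ∧
          (Q = vecMulVec l l ∨ Q = -vecMulVec l l)) ∧
      ¬(∃ l m : Fin N → ℝ, l ≠ 0 ∧ l ⬝ᵥ g⁻¹ *ᵥ l = 0 ∧ m ⬝ᵥ g⁻¹ *ᵥ m = 1 ∧
          l ⬝ᵥ g⁻¹ *ᵥ m = 0 ∧ Q = symOuter l m)) ∨
    (¬(Q = 0) ∧
      (∃ l : Fin N → ℝ, l ≠ 0 ∧ l ⬝ᵥ g⁻¹ *ᵥ l = 0 ∧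
          (Q = vecMulVec l l ∨ Q = -vecMulVec l l)) ∧
      ¬(∃ l m : Fin N → ℝ, l ≠ 0 ∧ l ⬝ᵥ g⁻¹ *ᵥ l = 0 ∧ m ⬝ᵥ g⁻¹ *ᵥ m = 1 ∧
          l ⬝ᵥ g⁻¹ *ᵥ m = 0 ∧ Q = symOuter l m)) ∨
    (¬(Q = 0) ∧
      ¬(∃ l : Fin N → ℝ, l ≠ 0 ∧ l ⬝ᵥ g⁻¹ *ᵥ l = 0 ∧
          (Q = vecMulVec l l ∨ Q = -vecMulVec l l)) ∧
      (∃ l m : Fin N → ℝ, l ≠ 0 ∧ l ⬝ᵥ g⁻¹ *ᵥ l = 0 ∧ m ⬝ᵥ g⁻¹ *ᵥ m = 1 ∧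
          l ⬝ᵥ g⁻¹ *ᵥ m = 0 ∧ Q = symOuter l m)) := by
  obtain ⟨P, hPdet, hPg⟩ := hsig
  have hQs : Qᵀ = Q := hQsymm
  have hgs : gᵀ = g := hgsymm
  have hetaeta : minkDiag N * minkDiag N = 1 := by
    rw [minkDiag, diagonal_mul_diagonal]
    have e : (fun i : Fin N => (if (i:ℕ)+1 < N then (1:ℝ) else -1)
        * (if (i:ℕ)+1 < N then (1:ℝ) else -1)) = fun _ => (1:ℝ) := by
      funext i; split_ifs <;> norm_num
    rw [e, diagonal_one]
  have hdeta : (minkDiag N).det ≠ 0 := by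
    rw [minkDiag, det_diagonal, Finset.prod_ne_zero_iff]
    intro i _; split_ifs <;> norm_num
  have hgdet : IsUnit g.det := by
    rw [isUnit_iff_ne_zero]
    intro h0
    apply hdeta
    rw [← hPg, det_mul, det_mul, h0]; ring
  have hgh : g * g⁻¹ = 1 := mul_nonsing_inv g hgdet
  have hhg : g⁻¹ * g = 1 := nonsing_inv_mul g hgdet
  have hPtg : Pᵀ * g = minkDiag N * P⁻¹ := by
    have h1 := congrArg (fun M => M * P⁻¹) hPg
    rw [mul_assoc (Pᵀ * g) P P⁻¹, mul_nonsing_inv P hPdet, mul_one] at h1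
    exact h1
  have hleft : (P * minkDiag N * Pᵀ) * g = 1 := by
    calc (P * minkDiag N * Pᵀ) * g = P * (minkDiag N * (Pᵀ * g)) := by simp only [mul_assoc]
    _ = P * (minkDiag N * (minkDiag N * P⁻¹)) := by rw [hPtg]
    _ = P * ((minkDiag N * minkDiag N) * P⁻¹) := by rw [mul_assoc]
    _ = P * P⁻¹ := by rw [hetaeta, one_mul]
    _ = 1 := mul_nonsing_inv P hPdet
  have hrep : g⁻¹ = P * minkDiag N * Pᵀ := inv_eq_left_inv hleft
  have hhsym : (g⁻¹)ᵀ = g⁻¹ := by rw [transpose_nonsing_inv, hgs]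
  have hPtdet : IsUnit (Pᵀ).det := by rwa [det_transpose]
  have hPtinj : ∀ u : Fin N → ℝ, Pᵀ *ᵥ u = 0 → u = 0 := by
    intro u hu
    have h1 : (Pᵀ)⁻¹ *ᵥ (Pᵀ *ᵥ u) = (Pᵀ)⁻¹ *ᵥ 0 := by rw [hu]
    rwa [mulVec_mulVec, nonsing_inv_mul _ hPtdet, one_mulVec, mulVec_zero] at h1
  have hdotP : ∀ v w : Fin N → ℝ, v ⬝ᵥ g⁻¹ *ᵥ w =
      (Pᵀ *ᵥ v) ⬝ᵥ minkDiag N *ᵥ (Pᵀ *ᵥ w) := by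
    intro v w; rw [hrep, dot_transfer]
  have T1 : ∀ v w : Fin N → ℝ, v ⬝ᵥ g⁻¹ *ᵥ v = 0 → w ⬝ᵥ g⁻¹ *ᵥ w = 0 →
      v ⬝ᵥ g⁻¹ *ᵥ w = 0 → v = 0 ∨ ∃ c : ℝ, w = c • v := by
    intro v w hv hw hvw
    rw [hdotP] at hv hw hvw
    rcases L1eta _ _ hv hw hvw with h0 | ⟨c, hc⟩
    · exact Or.inl (hPtinj v h0)
    · right; refine ⟨c, ?_⟩
      have h2 : Pᵀ *ᵥ (w - c • v) = 0 := by
        rw [mulVec_sub, hc, mulVec_smul, sub_self]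
      exact sub_eq_zero.mp (hPtinj _ h2)
  have T2 : ∀ p v : Fin N → ℝ, p ⬝ᵥ g⁻¹ *ᵥ p < 0 → p ⬝ᵥ g⁻¹ *ᵥ v = 0 →
      v ⬝ᵥ g⁻¹ *ᵥ v ≤ 0 → v = 0 := by
    intro p v hp hpv hv
    rw [hdotP] at hp hpv hv
    exact hPtinj v (L2eta _ _ hp hpv hv)
  obtain ⟨k, hk⟩ := hnil
  have h3 : (g⁻¹ * Q) ^ 3 = 0 := idx3 (g⁻¹) g Q hhsym hQs hhg hgh T1 k hk
  have hQ3 : Q * g⁻¹ * Q * g⁻¹ * Q = 0 := by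
    have e : g⁻¹ * (Q * g⁻¹ * Q * g⁻¹ * Q) = (g⁻¹ * Q) ^ 3 := by
      simp only [pow_succ, pow_zero, one_mul, mul_assoc]
    have h4 : g * (g⁻¹ * (Q * g⁻¹ * Q * g⁻¹ * Q)) = 0 := by rw [e, h3, mul_zero]
    rwa [← mul_assoc, hgh, one_mul] at h4
  have vmvne : ∀ l : Fin N → ℝ, l ≠ 0 → vecMulVec l l ≠ (0 : Matrix (Fin N) (Fin N) ℝ) := by
    intro l hl h0
    rcases (vmv_eq_zero_iff l l).mp h0 with h | h <;> exact hl h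
  have notIII : Q * g⁻¹ * Q = 0 →
      ¬(∃ l m : Fin N → ℝ, l ≠ 0 ∧ l ⬝ᵥ g⁻¹ *ᵥ l = 0 ∧ m ⬝ᵥ g⁻¹ *ᵥ m = 1 ∧
          l ⬝ᵥ g⁻¹ *ᵥ m = 0 ∧ Q = symOuter l m) := by
    rintro hz ⟨l, m, hl0, h1, h2, h3', hQeq⟩
    have hc := symOuter_contract (g⁻¹) hhsym l m h1 h2 h3'
    rw [← hQeq, hz] at hc
    rcases smul_eq_zero.mp hc.symm with h | h
    · norm_num at h
    · exact vmvne l hl0 h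
  have notII : Q * g⁻¹ * Q ≠ 0 →
      ¬(∃ l : Fin N → ℝ, l ≠ 0 ∧ l ⬝ᵥ g⁻¹ *ᵥ l = 0 ∧
          (Q = vecMulVec l l ∨ Q = -vecMulVec l l)) := by
    rintro hnz ⟨l, hl0, hnull, hc⟩
    apply hnz
    rcases hc with hc | hc
    · rw [hc, trip _ hhsym, hnull, zero_smul]
    · rw [hc]
      have e : (-vecMulVec l l) * g⁻¹ * (-vecMulVec l l)
          = vecMulVec l l * g⁻¹ * vecMulVec l l := by noncomm_ring
      rw [e, trip _ hhsym, hnull, zero_smul]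
  by_cases hQ0 : Q = 0
  · left
    refine ⟨hQ0, ?_, ?_⟩
    · rintro ⟨l, hl0, -, hc⟩
      rcases hc with hc | hc
      · exact vmvne l hl0 (hQ0 ▸ hc.symm)
      · apply vmvne l hl0
        have h5 : (0 : Matrix (Fin N) (Fin N) ℝ) = -vecMulVec l l := hQ0 ▸ hc
        simpa [neg_eq_zero] using h5.symm
    · apply notIII; rw [hQ0]; simp
  · by_cases hS0 : Q * g⁻¹ * Q = 0
    · right; left
      exact ⟨hQ0, rankOne (g⁻¹) Q T1 hQs hQ0 (by
        have e : Q * g⁻¹ * Q = 0 := hS0; exact e), notIII hS0⟩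
    · right; right
      refine ⟨hQ0, notII hS0, ?_⟩
      have hSsym : (Q * g⁻¹ * Q)ᵀ = Q * g⁻¹ * Q := by
        rw [transpose_mul, transpose_mul, hhsym, hQs, ← mul_assoc]
      have hShS : (Q * g⁻¹ * Q) * g⁻¹ * (Q * g⁻¹ * Q) = 0 := by
        have e : (Q * g⁻¹ * Q) * g⁻¹ * (Q * g⁻¹ * Q)
            = (Q * g⁻¹ * Q * g⁻¹ * Q) * (g⁻¹ * Q) := by simp only [mul_assoc]
        rw [e, hQ3, zero_mul]
      obtain ⟨ℓ, hl0, hlnull, hSc⟩ := rankOne (g⁻¹) (Q * g⁻¹ * Q) T1 hSsym hS0 hShS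
      have hQhl : (Q * g⁻¹) *ᵥ ℓ = 0 := by
        have hz : (Q * g⁻¹ * Q) * (g⁻¹ * Q) = 0 := by
          have e : (Q * g⁻¹ * Q) * (g⁻¹ * Q) = Q * g⁻¹ * Q * g⁻¹ * Q := by
            simp only [mul_assoc]
          rw [e, hQ3]
        have htr : (g⁻¹ * Q)ᵀ = Q * g⁻¹ := by rw [transpose_mul, hQs, hhsym]
        rcases hSc with hc | hc
        · rw [hc, vmv_mul, htr] at hz
          rcases (vmv_eq_zero_iff _ _).mp hz with h | h
          · exact absurd h hl0
          · exact h
        · rw [hc, neg_mul, vmv_mul, htr, neg_eq_zero] at hz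
          rcases (vmv_eq_zero_iff _ _).mp hz with h | h
          · exact absurd h hl0
          · exact h
      have ha : (ℓ ⬝ᵥ ℓ) ≠ 0 := fun h => hl0 (dotProduct_self_eq_zero.mp h)
      set u : Fin N → ℝ := (ℓ ⬝ᵥ ℓ)⁻¹ • ℓ with hu_def
      have hu1 : ℓ ⬝ᵥ u = 1 := by
        rw [hu_def, dotProduct_smul, smul_eq_mul, inv_mul_cancel₀ ha]
      set p : Fin N → ℝ := Q *ᵥ u with hp_def
      have hphp : p ⬝ᵥ g⁻¹ *ᵥ p = u ⬝ᵥ ((Q * g⁻¹ * Q) *ᵥ u) := by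
        rw [hp_def, mulVec_mulVec, dot_mulVec_left, hQs, mulVec_mulVec, ← mul_assoc]
      have hlp : ℓ ⬝ᵥ g⁻¹ *ᵥ p = 0 := by
        rw [hp_def, mulVec_mulVec]
        have e : ℓ ⬝ᵥ ((g⁻¹ * Q) *ᵥ u) = ((g⁻¹ * Q)ᵀ *ᵥ ℓ) ⬝ᵥ u := by
          rw [dot_mulVec_left, transpose_transpose]
        rw [e, transpose_mul, hQs, hhsym, hQhl, zero_dotProduct]
      have hphl : p ⬝ᵥ g⁻¹ *ᵥ ℓ = 0 := by rw [dot_symm' _ hhsym]; exact hlp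
      rcases hSc with hSc | hSc
      swap
      · exfalso
        have hval : p ⬝ᵥ g⁻¹ *ᵥ p = -1 := by
          rw [hphp, hSc, neg_mulVec, dotProduct_neg, vmv_mulVec, dotProduct_smul,
            smul_eq_mul, hu1, dotProduct_comm, hu1]
          norm_num
        exact hl0 (T2 p ℓ (by rw [hval]; norm_num) hphl (le_of_eq hlnull))
      · have hpval : p ⬝ᵥ g⁻¹ *ᵥ p = 1 := by
          rw [hphp, hSc, vmv_mulVec, dotProduct_smul, smul_eq_mul, hu1,
            dotProduct_comm, hu1, mul_one]
        have hQgp : (Q * g⁻¹) *ᵥ p = ℓ := by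
          rw [hp_def, mulVec_mulVec, hSc, vmv_mulVec, hu1, one_smul]
        have m1 : Q * g⁻¹ * vecMulVec ℓ p = 0 := by
          rw [mul_vmv, hQhl]
          ext i j; simp [vecMulVec_apply]
        have m2 : Q * g⁻¹ * vecMulVec p ℓ = vecMulVec ℓ ℓ := by
          rw [mul_vmv, hQgp]
        have m3 : vecMulVec ℓ p * g⁻¹ * Q = vecMulVec ℓ ℓ := by
          rw [vmv_mul, hhsym, vmv_mul, hQs, mulVec_mulVec, hQgp]
        have m4 : vecMulVec p ℓ * g⁻¹ * Q = 0 := by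
          rw [vmv_mul, hhsym, vmv_mul, hQs, mulVec_mulVec, hQhl]
          ext i j; simp [vecMulVec_apply]
        have t11 : vecMulVec ℓ p * g⁻¹ * vecMulVec ℓ p = 0 := by
          rw [trip _ hhsym, hphl, zero_smul]
        have t12 : vecMulVec ℓ p * g⁻¹ * vecMulVec p ℓ = vecMulVec ℓ ℓ := by
          rw [trip _ hhsym, hpval, one_smul]
        have t21 : vecMulVec p ℓ * g⁻¹ * vecMulVec ℓ p = 0 := by
          rw [trip _ hhsym, hlnull, zero_smul]
        have t22 : vecMulVec p ℓ * g⁻¹ * vecMulVec p ℓ = 0 := by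
          rw [trip _ hhsym, hlp, zero_smul]
        set T : Matrix (Fin N) (Fin N) ℝ := vecMulVec ℓ p + vecMulVec p ℓ with hT_def
        set R : Matrix (Fin N) (Fin N) ℝ := Q - T with hR_def
        have e1 : Q * g⁻¹ * T = vecMulVec ℓ ℓ := by
          rw [hT_def, mul_add, m1, m2, zero_add]
        have e2 : T * g⁻¹ * Q = vecMulVec ℓ ℓ := by
          rw [hT_def, add_mul, add_mul, m3, m4, add_zero]
        have e3 : T * g⁻¹ * T = vecMulVec ℓ ℓ := by
          have expT : T * g⁻¹ * T = vecMulVec ℓ p * g⁻¹ * vecMulVec ℓ p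
              + vecMulVec ℓ p * g⁻¹ * vecMulVec p ℓ
              + vecMulVec p ℓ * g⁻¹ * vecMulVec ℓ p
              + vecMulVec p ℓ * g⁻¹ * vecMulVec p ℓ := by
            rw [hT_def]; noncomm_ring
          rw [expT, t11, t12, t21, t22, zero_add, add_zero, add_zero]
        have hRhR : R * g⁻¹ * R = 0 := by
          have expR : R * g⁻¹ * R = Q * g⁻¹ * Q - Q * g⁻¹ * T - T * g⁻¹ * Q + T * g⁻¹ * T := by
            rw [hR_def]; noncomm_ring
          rw [expR, hSc, e1, e2, e3]
          abel
        have hRT : Rᵀ = R := by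
          rw [hR_def, transpose_sub, hQs, hT_def, transpose_add, vmv_transpose,
            vmv_transpose, add_comm (vecMulVec p ℓ)]
        have hRl : R *ᵥ (g⁻¹ *ᵥ ℓ) = 0 := by
          rw [hR_def, sub_mulVec, hT_def, add_mulVec, vmv_mulVec, vmv_mulVec,
            mulVec_mulVec, hQhl]
          have d1 : p ⬝ᵥ g⁻¹ *ᵥ ℓ = 0 := hphl
          have d2 : ℓ ⬝ᵥ g⁻¹ *ᵥ ℓ = 0 := hlnull
          rw [d1, d2]
          simp
        obtain ⟨β, hQR⟩ : ∃ β : ℝ,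
            Q = vecMulVec ℓ p + vecMulVec p ℓ + β • vecMulVec ℓ ℓ := by
          by_cases hR0 : R = 0
          · refine ⟨0, ?_⟩
            have hQT : Q = T := by rw [hR_def] at hR0; rwa [sub_eq_zero] at hR0
            rw [hQT, hT_def, zero_smul, add_zero]
          · obtain ⟨r, hr0, hrnull, hRc⟩ := rankOne (g⁻¹) R T1 hRT hR0 hRhR
            have hrl : r ⬝ᵥ g⁻¹ *ᵥ ℓ = 0 := by
              rcases hRc with hc | hc
              · have h6 := hRl
                rw [hc, vmv_mulVec] at h6
                rcases smul_eq_zero.mp h6 with h | h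
                · exact h
                · exact absurd h hr0
              · have h6 := hRl
                rw [hc, neg_mulVec, vmv_mulVec, neg_eq_zero] at h6
                rcases smul_eq_zero.mp h6 with h | h
                · exact h
                · exact absurd h hr0
            rcases T1 ℓ r hlnull hrnull (by rw [dot_symm' _ hhsym]; exact hrl)
              with h | ⟨c, hcr⟩
            · exact absurd h hl0
            · have hQ'' : Q = vecMulVec ℓ p + vecMulVec p ℓ + R := by
                rw [hR_def, hT_def]; abel
              rcases hRc with hc | hc
              · refine ⟨c * c, ?_⟩
                rw [hQ'', hc, hcr]
                congr 1
                ext i j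
                simp [vecMulVec_apply]
                ring
              · refine ⟨-(c * c), ?_⟩
                rw [hQ'', hc, hcr]
                congr 1
                ext i j
                simp [vecMulVec_apply]
                ring
        refine ⟨(2:ℝ) • ℓ, p + (β/2) • ℓ, ?_, ?_, ?_, ?_, ?_⟩
        · exact smul_ne_zero two_ne_zero hl0
        · rw [smul_dot_smul, hlnull]; ring
        · simp only [mulVec_add, mulVec_smul, dotProduct_add, add_dotProduct,
            dotProduct_smul, smul_dotProduct, smul_eq_mul]
          rw [hpval]
          have d1 : p ⬝ᵥ g⁻¹ *ᵥ ℓ = 0 := hphl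
          have d2 : ℓ ⬝ᵥ g⁻¹ *ᵥ ℓ = 0 := hlnull
          have d3 : ℓ ⬝ᵥ g⁻¹ *ᵥ p = 0 := hlp
          rw [d1, d2, d3]
          ring
        · simp only [mulVec_add, mulVec_smul, dotProduct_add, add_dotProduct,
            dotProduct_smul, smul_dotProduct, smul_eq_mul]
          have d2 : ℓ ⬝ᵥ g⁻¹ *ᵥ ℓ = 0 := hlnull
          have d3 : ℓ ⬝ᵥ g⁻¹ *ᵥ p = 0 := hlp
          rw [d2, d3]
          ring
        · rw [hQR, symOuter]
          ext i j
          simp only [Matrix.smul_apply, Matrix.add_apply, vecMulVec_apply,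
            Pi.add_apply, Pi.smul_apply, smul_eq_mul]
          ring
end

section
/- Let g and Q be symmetric real N×N matrices admitting a Petrov normal form: there exist r ≥ 1, block sizes d_1,…,d_r ≥ 1 with Σ d_λ = N, signs σ_λ ∈ {+1,−1}, and a basis {k^{λ,ν} : 1 ≤ λ ≤ r, 1 ≤ ν ≤ d_λ} of ℝ^N with g = Σ_{λ,ν} σ_λ k^{λ,ν} ⊙ k^{λ,d_λ+1−ν} and Q = Σ_{λ : d_λ>1} Σ_{ν=1}^{d_λ−1} σ_λ k^{λ,ν+1} ⊙ k^{λ,d_λ+1−ν}. Set σ_o = Σ_{λ : d_λ odd} σ_λ and σ_e = Σ_{λ : d_λ even} σ_λ. Then the quadratic form of g is nondegenerate with signature ((N+σ_o)/2 positive squares, (N−σ_o)/2 negative squares), and the quadratic form of Q has rank N−r with signature ((N−r+σ_e)/2 positive squares, (N−r−σ_e)/2 negative squares). -/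
open Matrix

open Finset

open Finset
noncomputable section PetrovAux
def dd (u v : ℕ) : ℝ := if u = v then 1 else 0
def ee (d u v : ℕ) : ℝ := if u = v ∧ u < d then 1 else 0
def ss : ℝ := (Real.sqrt 2)⁻¹
lemma hss : ss * ss = 1/2 := by
  rw [ss, ← mul_inv, Real.mul_self_sqrt (by norm_num : (0:ℝ) ≤ 2)]; norm_num
lemma sum_dd1 (d u : ℕ) (g : ℕ → ℝ) :
    ∑ x ∈ range d, dd x u * g x = if u < d then g u else 0 := by
  split_ifs with h
  · rw [Finset.sum_eq_single u]
    · simp [dd]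
    · intro b _ hb; simp [dd, hb]
    · intro hc; exact absurd (Finset.mem_range.2 h) hc
  · apply Finset.sum_eq_zero
    intro x hx
    have : (x:ℕ) ≠ u := by simp at hx; omega
    simp [dd, this]
lemma sum_dd2 (d u v : ℕ) : ∑ x ∈ range d, dd x u * dd x v = ee d u v := by
  rw [sum_dd1]; unfold dd ee; split_ifs <;> simp_all; omega
def pg (d a : ℕ) : ℝ := if 2*a+1 < d then ss else if 2*a+1 = d then 1 else -ss
def qg (d a : ℕ) : ℝ := if 2*a+1 < d then ss else if 2*a+1 = d then 0 else ss
def cg (d x a : ℕ) : ℝ := pg d a * dd x a + qg d a * dd (x + a + 1) d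
def pq (d a : ℕ) : ℝ := if a = 0 then 1 else if 2*a < d then ss else if 2*a = d then 1 else -ss
def qq (d a : ℕ) : ℝ := if a = 0 then 0 else if 2*a < d then ss else if 2*a = d then 0 else ss
def cq (d x a : ℕ) : ℝ := pq d a * dd x a + qq d a * dd (x + a) d
lemma sum_expand (d u w u' w' : ℕ) (A B C D : ℝ) :
    ∑ x ∈ range d, (A * dd x u + B * dd x w) * (C * dd x u' + D * dd x w')
      = A*C * ee d u u' + A*D * ee d u w' + B*C * ee d w u' + B*D * ee d w w' := by
  have h : ∀ x ∈ range d, (A * dd x u + B * dd x w) * (C * dd x u' + D * dd x w')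
      = A*C * (dd x u * dd x u') + A*D * (dd x u * dd x w')
        + B*C * (dd x w * dd x u') + B*D * (dd x w * dd x w') := by
    intro x _; ring
  rw [Finset.sum_congr rfl h]
  simp only [Finset.sum_add_distrib, ← Finset.mul_sum, sum_dd2]
lemma dd_congr {u v u' v' : ℕ} (h : u = v ↔ u' = v') : dd u v = dd u' v' := by
  unfold dd; exact if_congr h rfl rfl
lemma cg_eq (d x a : ℕ) (ha : a < d) : cg d x a = pg d a * dd x a + qg d a * dd x (d-1-a) := by
  rw [cg, dd_congr (show x+a+1 = d ↔ x = d-1-a by omega)]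
lemma cq_eq (d x a : ℕ) (ha : a < d) : cq d x a = pq d a * dd x a + qq d a * dd x (d-a) := by
  rw [cq, dd_congr (show x+a = d ↔ x = d-a by omega)]

set_option maxHeartbeats 2000000 in
lemma blockGO (d a a' : ℕ) (ha : a < d) (ha' : a' < d) :
    ∑ x ∈ range d, cg d x a * cg d x a' = dd a a' := by
  rw [Finset.sum_congr rfl (fun x _ => by rw [cg_eq d x a ha, cg_eq d x a' ha']), sum_expand]
  have hs := hss
  unfold pg qg dd ee
  split_ifs <;>
    first
      | (exfalso; omega)
      | ring1
      | linear_combination hs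
      | linear_combination 2*hs
      | linear_combination -hs
      | linear_combination (-2:ℝ)*hs

set_option maxHeartbeats 2000000 in
lemma blockQO (d a a' : ℕ) (ha : a < d) (ha' : a' < d) :
    ∑ x ∈ range d, cq d x a * cq d x a' = dd a a' := by
  rw [Finset.sum_congr rfl (fun x _ => by rw [cq_eq d x a ha, cq_eq d x a' ha']), sum_expand]
  have hs := hss
  unfold pq qq dd ee
  split_ifs <;>
    first
      | (exfalso; omega)
      | ring1
      | linear_combination hs
      | linear_combination 2*hs
      | linear_combination -hs
      | linear_combination (-2:ℝ)*hs

set_option maxHeartbeats 2000000 in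
lemma blockG (d a a' : ℕ) (ha : a < d) (ha' : a' < d) :
    ∑ x ∈ range d, ∑ y ∈ range d, cg d x a * (dd (x+y+1) d) * cg d y a'
      = dd a a' * (if 2*a < d then 1 else -1) := by
  have hstep : ∀ x ∈ range d,
      ∑ y ∈ range d, cg d x a * (dd (x+y+1) d) * cg d y a'
        = (pg d a * dd x a + qg d a * dd x (d-1-a))
            * (pg d a' * dd x (d-1-a') + qg d a' * dd x a') := by
    intro x hx
    have hxd : x < d := Finset.mem_range.1 hx
    have h1 : ∀ y ∈ range d, cg d x a * (dd (x+y+1) d) * cg d y a'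
        = dd y (d-1-x) * (cg d x a * cg d y a') := by
      intro y _
      rw [dd_congr (show x+y+1 = d ↔ y = d-1-x by omega)]; ring
    rw [Finset.sum_congr rfl h1, sum_dd1, if_pos (by omega : d-1-x < d)]
    rw [cg_eq d x a ha]
    congr 1
    rw [cg_eq d (d-1-x) a' ha',
      dd_congr (show d-1-x = a' ↔ x = d-1-a' by omega),
      dd_congr (show d-1-x = d-1-a' ↔ x = a' by omega)]
  rw [Finset.sum_congr rfl hstep, sum_expand]
  have hs := hss
  unfold pg qg dd ee
  split_ifs <;>
    first
      | (exfalso; omega)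
      | ring1
      | linear_combination hs
      | linear_combination 2*hs
      | linear_combination -hs
      | linear_combination (-2:ℝ)*hs

set_option maxHeartbeats 2000000 in
lemma blockQ (d a a' : ℕ) (ha : a < d) (ha' : a' < d) :
    ∑ x ∈ range d, ∑ y ∈ range d, cq d x a * (dd (x+y) d) * cq d y a'
      = dd a a' * (if a = 0 then 0 else if 2*a ≤ d then 1 else -1) := by
  have hstep : ∀ x ∈ range d,
      ∑ y ∈ range d, cq d x a * (dd (x+y) d) * cq d y a'
        = (pq d a * dd x a + qq d a * dd x (d-a))
            * (pq d a' * dd x (d-a') + qq d a' * dd x a') := by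
    intro x hx
    have hxd : x < d := Finset.mem_range.1 hx
    have h1 : ∀ y ∈ range d, cq d x a * (dd (x+y) d) * cq d y a'
        = dd y (d-x) * (cq d x a * cq d y a') := by
      intro y _
      rw [dd_congr (show x+y = d ↔ y = d-x by omega)]; ring
    rw [Finset.sum_congr rfl h1, sum_dd1]
    rcases Nat.eq_zero_or_pos x with hx0 | hx1
    · subst hx0
      rw [if_neg (by omega : ¬ (d-0 < d))]
      have h2 : dd 0 (d-a') = 0 := by unfold dd; rw [if_neg]; omega
      have h3 : qq d a' * dd 0 a' = 0 := by
        rcases Nat.eq_zero_or_pos a' with h | h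
        · subst h; simp [qq]
        · have : dd 0 a' = 0 := by unfold dd; rw [if_neg]; omega
          rw [this, mul_zero]
      rw [h2, mul_zero, zero_add, h3, mul_zero]
    · rw [if_pos (by omega : d-x < d), cq_eq d x a ha]
      congr 1
      rw [cq_eq d (d-x) a' ha',
        dd_congr (show d-x = a' ↔ x = d-a' by omega),
        dd_congr (show d-x = d-a' ↔ x = a' by omega)]
  rw [Finset.sum_congr rfl hstep, sum_expand]
  have hs := hss
  unfold pq qq dd ee
  split_ifs <;>
    first
      | (exfalso; omega)
      | ring1
      | linear_combination hs
      | linear_combination 2*hs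
      | linear_combination -hs
      | linear_combination (-2:ℝ)*hs
end PetrovAux

open Finset
noncomputable section SortAux

def segEquiv (N a b : ℕ) : {i : Fin N // a ≤ (i:ℕ) ∧ (i:ℕ) < b} ≃ Fin (min b N - a) where
  toFun x := ⟨(x.1:ℕ) - a, by have h := x.2; have h2 := x.1.2; omega⟩
  invFun j := ⟨⟨a + (j:ℕ), by have := j.2; omega⟩,
    by have := j.2; show a ≤ a + (j:ℕ) ∧ a + (j:ℕ) < b; omega⟩
  left_inv x := Subtype.ext (Fin.ext
    (by have h := x.2; show a + ((x.1:ℕ) - a) = (x.1:ℕ); omega))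
  right_inv j := Fin.ext (by have := j.2; show a + (j:ℕ) - a = (j:ℕ); omega)

lemma card_seg (N a b : ℕ) :
    Fintype.card {i : Fin N // a ≤ (i:ℕ) ∧ (i:ℕ) < b} = min b N - a := by
  rw [Fintype.card_congr (segEquiv N a b), Fintype.card_fin]

open Classical in
lemma sort_lemma {I : Type*} [Fintype I] (N : ℕ) (hN : Fintype.card I = N) (ε : I → ℝ)
    (hval : ∀ x, ε x = 1 ∨ ε x = -1 ∨ ε x = 0) :
    ∃ eqv : I ≃ Fin N,
      (∀ i : Fin N, ε (eqv.symm i) =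
        if (i:ℕ) < Fintype.card {x // ε x = 1} then 1
        else if (i:ℕ) < Fintype.card {x // ε x = 1} + Fintype.card {x // ε x = -1} then -1
        else 0)
      ∧ Fintype.card {x // ε x = 1} + Fintype.card {x // ε x = -1}
          + Fintype.card {x // ε x = 0} = N := by
  set pos := Fintype.card {x // ε x = 1} with hpos
  set neg := Fintype.card {x // ε x = -1} with hneg
  set zer := Fintype.card {x // ε x = 0} with hzer
  have hsum : pos + neg + zer = N := by
    rw [hpos, hneg, hzer]
    rw [Fintype.card_subtype, Fintype.card_subtype, Fintype.card_subtype]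
    rw [Finset.card_filter, Finset.card_filter, Finset.card_filter,
      ← Finset.sum_add_distrib, ← Finset.sum_add_distrib]
    have h : ∀ x ∈ (univ : Finset I),
        ((if ε x = 1 then 1 else 0) + (if ε x = -1 then 1 else 0))
          + (if ε x = 0 then 1 else 0) = 1 := by
      intro x _
      rcases hval x with h | h | h <;> rw [h] <;> norm_num
    rw [Finset.sum_congr rfl h]
    simp [hN]
  set f : Fin N → ℝ := fun i =>
    if (i:ℕ) < pos then 1 else if (i:ℕ) < pos + neg then -1 else 0 with hfdef
  have hfib : ∀ c : ℝ, Fintype.card {x // ε x = c} = Fintype.card {i : Fin N // f i = c} := by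
    intro c
    by_cases hc1 : c = 1
    · subst hc1
      have h1 : ∀ i : Fin N, (f i = 1 ↔ (0 ≤ (i:ℕ) ∧ (i:ℕ) < pos)) := by
        intro i; have hi2 := i.2; rw [hfdef]; dsimp only
        split_ifs with h h' <;> (try norm_num) <;> omega
      rw [Fintype.card_congr (Equiv.subtypeEquivRight h1), card_seg]
      omega
    · by_cases hc2 : c = -1
      · subst hc2
        have h1 : ∀ i : Fin N, (f i = -1 ↔ (pos ≤ (i:ℕ) ∧ (i:ℕ) < pos + neg)) := by
          intro i; have hi2 := i.2; rw [hfdef]; dsimp only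
          split_ifs with h h' <;> (try norm_num) <;> omega
        rw [Fintype.card_congr (Equiv.subtypeEquivRight h1), card_seg]
        omega
      · by_cases hc3 : c = 0
        · subst hc3
          have h1 : ∀ i : Fin N, (f i = 0 ↔ (pos + neg ≤ (i:ℕ) ∧ (i:ℕ) < N)) := by
            intro i; have hi2 := i.2; rw [hfdef]; dsimp only
            split_ifs with h h' <;> (try norm_num) <;> omega
          rw [Fintype.card_congr (Equiv.subtypeEquivRight h1), card_seg]
          omega
        · have e1 : Fintype.card {x // ε x = c} = 0 := by
            rw [Fintype.card_eq_zero_iff]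
            refine ⟨fun ⟨x, hx⟩ => ?_⟩
            rcases hval x with h | h | h
            exacts [hc1 (hx.symm.trans h), hc2 (hx.symm.trans h), hc3 (hx.symm.trans h)]
          have e2 : Fintype.card {i : Fin N // f i = c} = 0 := by
            rw [Fintype.card_eq_zero_iff]
            refine ⟨fun ⟨i, hi⟩ => ?_⟩
            rw [hfdef] at hi; dsimp only at hi
            split_ifs at hi <;> exact absurd hi.symm (by assumption)
          rw [e1, e2]
  let eqv : I ≃ Fin N :=
    ((Equiv.sigmaFiberEquiv ε).symm.trans
      (Equiv.sigmaCongrRight fun c => Fintype.equivOfCardEq (hfib c))).trans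
      (Equiv.sigmaFiberEquiv f)
  have hf : ∀ x : I, f (eqv x) = ε x := by
    intro x
    exact (((Equiv.sigmaCongrRight fun c => Fintype.equivOfCardEq (hfib c))
      ((Equiv.sigmaFiberEquiv ε).symm x)).2).2
  exact ⟨eqv, fun i => by rw [← hf (eqv.symm i), Equiv.apply_symm_apply], hsum⟩

end SortAux

open Finset Matrix
noncomputable section PetrovBlkSec
variable {r : ℕ} (d : Fin r → ℕ) (σ : Fin r → ℝ)

def blk (f : Fin r → ℕ → ℕ → ℝ) : Matrix (Σ l, Fin (d l)) (Σ l, Fin (d l)) ℝ :=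
  fun x y => if x.1 = y.1 then f y.1 (x.2:ℕ) (y.2:ℕ) else 0

lemma sigma_sum (f : (Σ l, Fin (d l)) → ℝ) :
    ∑ x : (Σ l, Fin (d l)), f x = ∑ l, ∑ ν : Fin (d l), f ⟨l, ν⟩ := by
  rw [← Finset.univ_sigma_univ, Finset.sum_sigma]

lemma blk_mul (f g : Fin r → ℕ → ℕ → ℝ) :
    blk d f * blk d g = blk d (fun l u v => ∑ w ∈ range (d l), f l u w * g l w v) := by
  ext x y
  rw [Matrix.mul_apply, sigma_sum]
  rcases eq_or_ne x.1 y.1 with h | h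
  · obtain ⟨l, α⟩ := x; obtain ⟨l', β⟩ := y
    dsimp only at h; subst h
    rw [Finset.sum_eq_single l]
    · simp only [blk, if_pos rfl, if_true]
      rw [Fin.sum_univ_eq_sum_range (fun w => f l (α:ℕ) w * g l w (β:ℕ))]
    · intro m _ hm
      apply Finset.sum_eq_zero; intro ν _
      have h1 : l ≠ m := Ne.symm hm
      simp [blk, h1]
    · intro hc; exact absurd (Finset.mem_univ l) hc
  · have hy : blk d (fun l u v => ∑ w ∈ range (d l), f l u w * g l w v) x y = 0 := by
      simp [blk, h]
    rw [hy]
    apply Finset.sum_eq_zero; intro m _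
    apply Finset.sum_eq_zero; intro ν _
    rcases eq_or_ne x.1 m with h1 | h1
    · have h2 : m ≠ y.1 := by rw [← h1]; exact h
      simp [blk, h2]
    · simp [blk, h1]

lemma blk_transpose (f : Fin r → ℕ → ℕ → ℝ) :
    (blk d f)ᵀ = blk d (fun l u v => f l v u) := by
  ext x y
  simp only [Matrix.transpose_apply, blk]
  rcases eq_or_ne x.1 y.1 with h | h
  · obtain ⟨l, α⟩ := x; obtain ⟨l', β⟩ := y
    dsimp only at h; subst h
    simp
  · rw [if_neg (Ne.symm h), if_neg h]

lemma blk_one : blk d (fun _ => dd) = 1 := by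
  ext x y
  rcases eq_or_ne x.1 y.1 with h | h
  · obtain ⟨l, α⟩ := x; obtain ⟨l', β⟩ := y
    dsimp only at h; subst h
    simp only [blk, if_pos rfl, Matrix.one_apply]
    rcases eq_or_ne α β with h2 | h2
    · subst h2; simp [dd]
    · have hv : dd (α:ℕ) (β:ℕ) = 0 := by
        unfold dd; rw [if_neg (fun hc => h2 (Fin.val_inj.mp hc))]
      rw [hv]; simp [h2]
  · simp only [blk, if_neg h, Matrix.one_apply]
    rw [if_neg (fun hc => h (congrArg Sigma.fst hc))]

lemma blk_diagonal (e : (l : Fin r) → ℕ → ℝ) :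
    blk d (fun l u v => dd u v * e l u) = Matrix.diagonal (fun x : Σ l, Fin (d l) => e x.1 (x.2:ℕ)) := by
  ext x y
  rcases eq_or_ne x.1 y.1 with h | h
  · obtain ⟨l, α⟩ := x; obtain ⟨l', β⟩ := y
    dsimp only at h; subst h
    simp only [blk, if_pos rfl, Matrix.diagonal_apply]
    rcases eq_or_ne α β with h2 | h2
    · subst h2; simp [dd]
    · have hv : dd (α:ℕ) (β:ℕ) = 0 := by
        unfold dd; rw [if_neg (fun hc => h2 (Fin.val_inj.mp hc))]
      rw [hv]; simp [h2]
  · simp only [blk, if_neg h, Matrix.diagonal_apply]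
    rw [if_neg (fun hc => h (congrArg Sigma.fst hc))]

lemma blk_congr (f g : Fin r → ℕ → ℕ → ℝ)
    (h : ∀ l u v, u < d l → v < d l → f l u v = g l u v) : blk d f = blk d g := by
  ext x y
  rcases eq_or_ne x.1 y.1 with hc | hc
  · obtain ⟨l, α⟩ := x; obtain ⟨l', β⟩ := y
    dsimp only at hc; subst hc
    simp only [blk, if_pos rfl]
    exact h l α β α.2 β.2
  · simp [blk, hc]

/-- congruence to diagonal for the `g` normal form -/
lemma CG_diag (hσ : ∀ l, σ l = 1 ∨ σ l = -1) :
    (blk d (fun l => cg (d l)))ᵀ * blk d (fun l u v => σ l * dd (u+v+1) (d l))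
        * blk d (fun l => cg (d l))
      = Matrix.diagonal (fun x : Σ l, Fin (d l) =>
          σ x.1 * (if 2*(x.2:ℕ) < d x.1 then 1 else -1)) := by
  rw [blk_transpose, blk_mul, blk_mul, ← blk_diagonal d (fun l u => σ l * (if 2*u < d l then 1 else -1))]
  apply blk_congr
  intro l u v hu hv
  have h1 : ∀ w' ∈ range (d l),
      (∑ w ∈ range (d l), cg (d l) w u * (σ l * dd (w+w'+1) (d l))) * cg (d l) w' v
        = σ l * ∑ w ∈ range (d l), cg (d l) w u * dd (w+w'+1) (d l) * cg (d l) w' v := by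
    intro w' _
    rw [Finset.mul_sum, Finset.sum_mul]
    apply Finset.sum_congr rfl; intro w _; ring
  rw [Finset.sum_congr rfl h1, ← Finset.mul_sum, Finset.sum_comm, blockG (d l) u v hu hv]
  ring

/-- congruence to diagonal for the `Q` normal form -/
lemma CQ_diag (hσ : ∀ l, σ l = 1 ∨ σ l = -1) :
    (blk d (fun l => cq (d l)))ᵀ * blk d (fun l u v => σ l * dd (u+v) (d l))
        * blk d (fun l => cq (d l))
      = Matrix.diagonal (fun x : Σ l, Fin (d l) =>
          σ x.1 * (if (x.2:ℕ) = 0 then 0 else if 2*(x.2:ℕ) ≤ d x.1 then 1 else -1)) := by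
  rw [blk_transpose, blk_mul, blk_mul,
    ← blk_diagonal d (fun l u => σ l * (if u = 0 then 0 else if 2*u ≤ d l then 1 else -1))]
  apply blk_congr
  intro l u v hu hv
  have h1 : ∀ w' ∈ range (d l),
      (∑ w ∈ range (d l), cq (d l) w u * (σ l * dd (w+w') (d l))) * cq (d l) w' v
        = σ l * ∑ w ∈ range (d l), cq (d l) w u * dd (w+w') (d l) * cq (d l) w' v := by
    intro w' _
    rw [Finset.mul_sum, Finset.sum_mul]
    apply Finset.sum_congr rfl; intro w _; ring
  rw [Finset.sum_congr rfl h1, ← Finset.mul_sum, Finset.sum_comm, blockQ (d l) u v hu hv]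
  ring

lemma CG_orth : (blk d (fun l => cg (d l)))ᵀ * blk d (fun l => cg (d l)) = 1 := by
  rw [blk_transpose, blk_mul, ← blk_one d]
  apply blk_congr
  intro l u v hu hv
  exact blockGO (d l) u v hu hv

lemma CQ_orth : (blk d (fun l => cq (d l)))ᵀ * blk d (fun l => cq (d l)) = 1 := by
  rw [blk_transpose, blk_mul, ← blk_one d]
  apply blk_congr
  intro l u v hu hv
  exact blockQO (d l) u v hu hv

end PetrovBlkSec

open Finset Matrix
noncomputable section PetrovAsmSec

lemma submatrix_mul_id {α : Type*} [NonUnitalNonAssocSemiring α] {l m n o : Type*} [Fintype m]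
    (A : Matrix l m α) (B : Matrix m n α) (f : o → l) :
    A.submatrix f id * B = (A * B).submatrix f id := by
  ext i j; simp [Matrix.mul_apply]

lemma mul_submatrix_id {α : Type*} [NonUnitalNonAssocSemiring α] {l m n o : Type*} [Fintype m]
    (A : Matrix l m α) (B : Matrix m n α) (f : o → n) :
    A * B.submatrix id f = (A * B).submatrix id f := by
  ext i j; simp [Matrix.mul_apply]

lemma assemble {I : Type*} [Fintype I] [DecidableEq I] {N : ℕ}
    (M : Matrix (Fin N) (Fin N) ℝ) (K : Matrix (Fin N) I ℝ) (K' : Matrix I (Fin N) ℝ)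
    (S C : Matrix I I ℝ) (ε : I → ℝ) (f : Fin N → ℝ)
    (hKK' : K * K' = 1) (hK'K : K' * K = 1)
    (hM : M = K * S * Kᵀ) (hC : Cᵀ * C = 1) (hD : Cᵀ * S * C = Matrix.diagonal ε)
    (eqv : I ≃ Fin N) (hf : ∀ i, ε (eqv.symm i) = f i) :
    ∃ P : Matrix (Fin N) (Fin N) ℝ, IsUnit P.det ∧ Pᵀ * M * P = Matrix.diagonal f := by
  have hKt : Kᵀ * K'ᵀ = 1 := by rw [← Matrix.transpose_mul, hK'K, Matrix.transpose_one]
  have hKt' : K'ᵀ * Kᵀ = 1 := by rw [← Matrix.transpose_mul, hKK', Matrix.transpose_one]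
  have hCC : C * Cᵀ = 1 := mul_eq_one_comm.mp hC
  refine ⟨(K'ᵀ * C).submatrix id eqv.symm, ?_, ?_⟩
  · have hinv : (K'ᵀ * C).submatrix id eqv.symm * (Cᵀ * Kᵀ).submatrix eqv.symm id = 1 := by
      have := Matrix.submatrix_mul_equiv (K'ᵀ * C) (Cᵀ * Kᵀ) (id : Fin N → Fin N)
        eqv.symm (id : Fin N → Fin N)
      rw [this]
      have : K'ᵀ * C * (Cᵀ * Kᵀ) = 1 := by
        calc K'ᵀ * C * (Cᵀ * Kᵀ) = K'ᵀ * (C * Cᵀ) * Kᵀ := by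
              simp only [Matrix.mul_assoc]
          _ = 1 := by rw [hCC, Matrix.mul_one, hKt']
      rw [this, Matrix.submatrix_id_id]
    have : Invertible ((K'ᵀ * C).submatrix id eqv.symm) :=
      invertibleOfRightInverse _ _ hinv
    exact Matrix.isUnit_det_of_invertible _
  · rw [hM, Matrix.transpose_submatrix, Matrix.transpose_mul, submatrix_mul_id,
      submatrix_mul_id, mul_submatrix_id]
    have halg : Cᵀ * K'ᵀᵀ * (K * S * Kᵀ) * (K'ᵀ * C) = Matrix.diagonal ε := by
      rw [Matrix.transpose_transpose]
      calc Cᵀ * K' * (K * S * Kᵀ) * (K'ᵀ * C)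
          = Cᵀ * ((K' * K) * (S * (Kᵀ * K'ᵀ))) * C := by simp only [Matrix.mul_assoc]
        _ = Cᵀ * S * C := by rw [hK'K, hKt, Matrix.mul_one, Matrix.one_mul]
        _ = Matrix.diagonal ε := hD
    rw [halg, Matrix.submatrix_submatrix, Function.comp_id, Function.id_comp,
      Matrix.submatrix_diagonal_equiv]
    have : ε ∘ ⇑eqv.symm = f := funext hf
    rw [this]

end PetrovAsmSec

open Finset Matrix

noncomputable section PetrovRepSec

lemma tripleProd {m n : Type*} [Fintype m] (A : Matrix m n ℝ) (S : Matrix m m ℝ)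
    (B : Matrix m n ℝ) (a b : n) :
    (Aᵀ * S * B) a b = ∑ x, ∑ y, A x a * S x y * B y b := by
  rw [Matrix.mul_apply]
  simp only [Matrix.mul_apply, Matrix.transpose_apply, Finset.sum_mul]
  rw [Finset.sum_comm]

/-- the rotation-by-one permutation of `Fin D` -/
def rotP (D : ℕ) : Equiv.Perm (Fin D) where
  toFun ν := ⟨if (ν:ℕ)+1 < D then (ν:ℕ)+1 else 0, by have := ν.2; split_ifs <;> omega⟩
  invFun μ := ⟨if 1 ≤ (μ:ℕ) then (μ:ℕ)-1 else D-1, by have := μ.2; split_ifs <;> omega⟩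
  left_inv ν := by
    have := ν.2
    apply Fin.ext
    dsimp only
    split_ifs <;> omega
  right_inv μ := by
    have := μ.2
    apply Fin.ext
    dsimp only
    split_ifs <;> omega

lemma rotP_val {D : ℕ} (ν : Fin D) :
    ((rotP D ν : Fin D) : ℕ) = if (ν:ℕ)+1 < D then (ν:ℕ)+1 else 0 := by
  simp only [rotP, Equiv.coe_fn_mk]

variable {N r : ℕ} (d : Fin r → ℕ) (σ : Fin r → ℝ)
  (k : (Σ l : Fin r, Fin (d l)) → Fin N → ℝ)

lemma keq (l : Fin r) (u v : Fin (d l)) (h : (u:ℕ) = (v:ℕ)) :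
    k ⟨l, u⟩ = k ⟨l, v⟩ := by rw [Fin.ext h]

lemma rep_g (K : Matrix (Fin N) (Σ l, Fin (d l)) ℝ) (hK : ∀ i a, K i a = k a i) :
    (∑ l, ∑ ν : Fin (d l), σ l • symOuter (k ⟨l, ν⟩) (k ⟨l, ν.rev⟩))
      = K * blk d (fun l u v => σ l * dd (u+v+1) (d l)) * Kᵀ := by
  ext i j
  rw [show K = (Kᵀ)ᵀ from (Matrix.transpose_transpose K).symm, tripleProd]
  simp only [Matrix.transpose_apply, hK]
  rw [sigma_sum]
  simp only [Matrix.sum_apply, Matrix.smul_apply, symOuter, Matrix.add_apply,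
    Matrix.vecMulVec_apply, smul_eq_mul]
  apply Finset.sum_congr rfl
  intro l _
  set F : Fin (d l) → ℝ := fun w => k ⟨l, w⟩ i * σ l * k ⟨l, w.rev⟩ j with hF
  have hinner : ∀ ν : Fin (d l),
      (∑ y : (Σ m, Fin (d m)), k ⟨l, ν⟩ i
          * blk d (fun m u v => σ m * dd (u+v+1) (d m)) ⟨l, ν⟩ y * k y j) = F ν := by
    intro ν
    rw [sigma_sum]
    rw [Finset.sum_eq_single l]
    · rw [Finset.sum_eq_single ν.rev]
      · have h1 : dd ((ν:ℕ) + ((ν.rev : Fin (d l)):ℕ) + 1) (d l) = 1 := by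
          unfold dd; rw [if_pos]; rw [Fin.val_rev]; have := ν.2; omega
        simp only [blk, if_pos rfl, if_true, h1, hF]
        ring
      · intro μ _ hμ
        have h1 : dd ((ν:ℕ) + (μ:ℕ) + 1) (d l) = 0 := by
          unfold dd; rw [if_neg]
          intro hc; apply hμ; apply Fin.ext; rw [Fin.val_rev]; omega
        simp [blk, h1]
      · intro hc; exact absurd (Finset.mem_univ _) hc
    · intro m _ hm
      apply Finset.sum_eq_zero; intro μ _
      have h1 : l ≠ m := Ne.symm hm
      simp [blk, h1]
    · intro hc; exact absurd (Finset.mem_univ _) hc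
  rw [Finset.sum_congr rfl (fun ν _ => hinner ν)]
  have hsplit : ∀ ν ∈ (univ : Finset (Fin (d l))),
      σ l * (1/2 * (k ⟨l,ν⟩ i * k ⟨l,ν.rev⟩ j + k ⟨l,ν.rev⟩ i * k ⟨l,ν⟩ j))
        = (1/2) * F ν + (1/2) * F (ν.rev) := by
    intro ν _
    rw [hF]; dsimp only
    rw [Fin.rev_rev]
    ring
  rw [Finset.sum_congr rfl hsplit, Finset.sum_add_distrib, ← Finset.mul_sum, ← Finset.mul_sum]
  have hrevsum : ∑ ν : Fin (d l), F (ν.rev) = ∑ ν : Fin (d l), F ν := by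
    have h := Equiv.sum_comp (Fin.revPerm) F
    simpa only [Fin.revPerm_apply] using h
  rw [hrevsum]
  ring

lemma rep_Q (hd : ∀ l, 1 ≤ d l) (K : Matrix (Fin N) (Σ l, Fin (d l)) ℝ)
    (hK : ∀ i a, K i a = k a i) :
    (∑ l, ∑ ν : Fin (d l), if h : (ν : ℕ) + 1 < d l then
        σ l • symOuter (k ⟨l, ⟨(ν : ℕ) + 1, h⟩⟩) (k ⟨l, ν.rev⟩) else 0)
      = K * blk d (fun l u v => σ l * dd (u+v) (d l)) * Kᵀ := by
  ext i j
  rw [show K = (Kᵀ)ᵀ from (Matrix.transpose_transpose K).symm, tripleProd]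
  simp only [Matrix.transpose_apply, hK]
  rw [sigma_sum]
  simp only [Matrix.sum_apply]
  apply Finset.sum_congr rfl
  intro l _
  set F : Fin (d l) → ℝ := fun w =>
    if h : 1 ≤ (w:ℕ) then
      k ⟨l, w⟩ i * σ l * k ⟨l, ⟨d l - (w:ℕ), Nat.sub_lt (Nat.lt_of_lt_of_le Nat.zero_lt_one (hd l)) h⟩⟩ j
    else 0 with hF
  have hinner : ∀ ν : Fin (d l),
      (∑ y : (Σ m, Fin (d m)), k ⟨l, ν⟩ i
          * blk d (fun m u v => σ m * dd (u+v) (d m)) ⟨l, ν⟩ y * k y j) = F ν := by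
    intro ν
    rw [sigma_sum]
    rw [Finset.sum_eq_single l]
    · by_cases h : 1 ≤ (ν:ℕ)
      · rw [hF]; dsimp only; rw [dif_pos h]
        rw [Finset.sum_eq_single (⟨d l - (ν:ℕ),
            Nat.sub_lt (Nat.lt_of_lt_of_le Nat.zero_lt_one (hd l)) h⟩ : Fin (d l))]
        · have h1 : dd ((ν:ℕ) + (d l - (ν:ℕ))) (d l) = 1 := by
            unfold dd; rw [if_pos]; have := ν.2; omega
          simp only [blk, if_pos rfl, if_true, h1]
          ring
        · intro μ _ hμ
          have h1 : dd ((ν:ℕ) + (μ:ℕ)) (d l) = 0 := by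
            unfold dd; rw [if_neg]
            intro hc; apply hμ; apply Fin.ext; show (μ:ℕ) = d l - (ν:ℕ); omega
          simp [blk, h1]
        · intro hc; exact absurd (Finset.mem_univ _) hc
      · rw [hF]; dsimp only; rw [dif_neg h]
        apply Finset.sum_eq_zero; intro μ _
        have h1 : dd ((ν:ℕ) + (μ:ℕ)) (d l) = 0 := by
          unfold dd; rw [if_neg]; have := μ.2; omega
        simp [blk, h1]
    · intro m _ hm
      apply Finset.sum_eq_zero; intro μ _
      have h1 : l ≠ m := Ne.symm hm
      simp [blk, h1]
    · intro hc; exact absurd (Finset.mem_univ _) hc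
  rw [Finset.sum_congr rfl (fun ν _ => hinner ν)]
  have hsplit : ∀ ν ∈ (univ : Finset (Fin (d l))),
      (if h : (ν : ℕ) + 1 < d l then
          σ l • symOuter (k ⟨l, ⟨(ν : ℕ) + 1, h⟩⟩) (k ⟨l, ν.rev⟩) else 0) i j
        = (1/2) * F (rotP (d l) ν) + (1/2) * F (ν.rev) := by
    intro ν _
    by_cases h : (ν:ℕ) + 1 < d l
    · rw [dif_pos h]
      have hrot : F (rotP (d l) ν) = k ⟨l, ⟨(ν:ℕ)+1, h⟩⟩ i * σ l * k ⟨l, ν.rev⟩ j := by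
        rw [hF]; dsimp only
        rw [dif_pos (by rw [rotP_val]; split_ifs <;> omega : 1 ≤ ((rotP (d l) ν : Fin (d l)):ℕ))]
        rw [keq d k l (rotP (d l) ν) ⟨(ν:ℕ)+1, h⟩ (by rw [rotP_val]; rw [if_pos h])]
        rw [keq d k l ⟨d l - ((rotP (d l) ν : Fin (d l)):ℕ), _⟩ ν.rev
          (by show d l - ((rotP (d l) ν : Fin (d l)):ℕ) = ((ν.rev : Fin (d l)):ℕ)
              rw [rotP_val, if_pos h, Fin.val_rev])]
      have hrev : F ν.rev = k ⟨l, ν.rev⟩ i * σ l * k ⟨l, ⟨(ν:ℕ)+1, h⟩⟩ j := by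
        rw [hF]; dsimp only
        have hv := ν.2
        rw [dif_pos (by rw [Fin.val_rev]; omega : 1 ≤ ((ν.rev : Fin (d l)):ℕ))]
        rw [keq d k l ⟨d l - ((ν.rev : Fin (d l)):ℕ), _⟩ ⟨(ν:ℕ)+1, h⟩
          (by show d l - ((ν.rev : Fin (d l)):ℕ) = (ν:ℕ)+1; rw [Fin.val_rev]; omega)]
      rw [hrot, hrev]
      simp only [Matrix.smul_apply, symOuter, Matrix.add_apply, Matrix.vecMulVec_apply,
        smul_eq_mul]
      ring
    · rw [dif_neg h]
      have hv := ν.2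
      have h0 : (ν:ℕ) = d l - 1 := by omega
      have hrot : F (rotP (d l) ν) = 0 := by
        rw [hF]; dsimp only
        rw [dif_neg (by rw [rotP_val]; rw [if_neg h]; omega)]
      have hrev : F ν.rev = 0 := by
        rw [hF]; dsimp only
        rw [dif_neg (by rw [Fin.val_rev]; omega)]
      rw [hrot, hrev]
      simp
  rw [Finset.sum_congr rfl hsplit, Finset.sum_add_distrib, ← Finset.mul_sum, ← Finset.mul_sum]
  have hrevsum : ∑ ν : Fin (d l), F (ν.rev) = ∑ ν : Fin (d l), F ν := by
    have h := Equiv.sum_comp (Fin.revPerm) F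
    simpa only [Fin.revPerm_apply] using h
  rw [Equiv.sum_comp (rotP (d l)) F, hrevsum]
  ring

end PetrovRepSec

open Finset

section PetrovCountSec

lemma count_sigma {r : ℕ} (d : Fin r → ℕ) (p : (Σ l, Fin (d l)) → Prop) [DecidablePred p] :
    Fintype.card {x // p x} = ∑ l, ((univ : Finset (Fin (d l))).filter (fun ν => p ⟨l, ν⟩)).card := by
  rw [Fintype.card_subtype]
  have h : (univ : Finset (Σ l, Fin (d l))).filter p
      = (univ : Finset (Fin r)).sigma (fun l => (univ : Finset (Fin (d l))).filter (fun ν => p ⟨l, ν⟩)) := by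
    ext ⟨l, ν⟩
    simp [Finset.mem_sigma]
  rw [h, Finset.card_sigma]

lemma count_fin (D : ℕ) (p : ℕ → Prop) [DecidablePred p] :
    ((univ : Finset (Fin D)).filter (fun ν : Fin D => p ν.val)).card = ((range D).filter p).card := by
  apply Finset.card_bij (fun (ν : Fin D) _ => (ν:ℕ))
  · intro a ha
    simp only [Finset.mem_filter, Finset.mem_range]
    exact ⟨a.2, (Finset.mem_filter.mp ha).2⟩
  · intro a _ b _ h
    exact Fin.val_inj.mp h
  · intro b hb
    simp only [Finset.mem_filter, Finset.mem_range] at hb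
    exact ⟨⟨b, hb.1⟩, by simp [hb.2], rfl⟩

lemma count_range (D a b : ℕ) :
    ((range D).filter (fun x => a ≤ x ∧ x < b)).card = min b D - a := by
  have h : (range D).filter (fun x => a ≤ x ∧ x < b) = Finset.Ico a (min b D) := by
    ext x
    simp only [Finset.mem_filter, Finset.mem_range, Finset.mem_Ico]
    omega
  rw [h, Nat.card_Ico]

lemma count_pred (D a b : ℕ) (p : ℕ → Prop) [DecidablePred p]
    (hp : ∀ x < D, (p x ↔ (a ≤ x ∧ x < b))) :
    ((univ : Finset (Fin D)).filter (fun ν : Fin D => p ν.val)).card = min b D - a := by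
  rw [count_fin, ← count_range D a b]
  congr 1
  apply Finset.filter_congr
  intro x hx
  simpa using hp x (Finset.mem_range.mp hx)

end PetrovCountSec

set_option maxHeartbeats 2000000

/-- **Proposition B.5** (`prop:vsig`): if symmetric matrices `g`, `Q` admit a Petrov
normal form with block sizes `d_λ` and block signatures `σ_λ = ±1`, then (by Sylvester's
law of inertia, signatures expressed via congruence to signed diagonal matrices) `g` is
nondegenerate of signature `((N+σ_o)/2, (N−σ_o)/2)` where `σ_o = Σ_{d_λ odd} σ_λ`, and
`Q` has rank `N − r` and signature `((N−r+σ_e)/2, (N−r−σ_e)/2)` where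
`σ_e = Σ_{d_λ even} σ_λ`. -/
theorem petrov_signatures (N : ℕ) (g Q : Matrix (Fin N) (Fin N) ℝ)
    (r : ℕ) (hr : 1 ≤ r) (d : Fin r → ℕ) (hd : ∀ l, 1 ≤ d l) (hsum : (∑ l, d l) = N)
    (σ : Fin r → ℝ) (hσ : ∀ l, σ l = 1 ∨ σ l = -1)
    (k : (Σ l : Fin r, Fin (d l)) → (Fin N → ℝ))
    (hli : LinearIndependent ℝ k) (hspan : Submodule.span ℝ (Set.range k) = ⊤)
    (hg : g = (∑ l : Fin r, ∑ ν : Fin (d l), σ l • symOuter (k ⟨l, ν⟩) (k ⟨l, ν.rev⟩)))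
    (hQ : Q = (∑ l : Fin r, ∑ ν : Fin (d l),
            if h : (ν : ℕ) + 1 < d l then
              σ l • symOuter (k ⟨l, ⟨(ν : ℕ) + 1, h⟩⟩) (k ⟨l, ν.rev⟩)
            else 0)) :
    (∃ (P : Matrix (Fin N) (Fin N) ℝ) (pos neg : ℕ), IsUnit P.det ∧
        pos + neg = N ∧
        (2 * pos : ℝ) = N + (∑ l ∈ Finset.univ.filter (fun l => d l % 2 = 1), σ l) ∧
        (2 * neg : ℝ) = N - (∑ l ∈ Finset.univ.filter (fun l => d l % 2 = 1), σ l) ∧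
        Pᵀ * g * P = Matrix.diagonal (fun i : Fin N => if (i : ℕ) < pos then 1 else -1)) ∧
    (∃ (P : Matrix (Fin N) (Fin N) ℝ) (pos neg : ℕ), IsUnit P.det ∧
        pos + neg = N - r ∧
        (2 * pos : ℝ) = (N - r : ℕ) + (∑ l ∈ Finset.univ.filter (fun l => d l % 2 = 0), σ l) ∧
        (2 * neg : ℝ) = (N - r : ℕ) - (∑ l ∈ Finset.univ.filter (fun l => d l % 2 = 0), σ l) ∧
        Pᵀ * Q * P = Matrix.diagonal (fun i : Fin N =>
          if (i : ℕ) < pos then 1 else if (i : ℕ) < pos + neg then -1 else 0)) := by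
  classical
  have hspan' : ⊤ ≤ Submodule.span ℝ (Set.range k) := by rw [hspan]
  set b : Module.Basis (Σ l, Fin (d l)) ℝ (Fin N → ℝ) := Module.Basis.mk hli hspan' with hb
  set e0 : Module.Basis (Fin N) ℝ (Fin N → ℝ) := Pi.basisFun ℝ (Fin N) with he0
  set K : Matrix (Fin N) (Σ l, Fin (d l)) ℝ := e0.toMatrix ⇑b with hKdef
  set K' : Matrix (Σ l, Fin (d l)) (Fin N) ℝ := b.toMatrix ⇑e0 with hK'def
  have hK : ∀ i a, K i a = k a i := by
    intro i a
    rw [hKdef, Module.Basis.toMatrix_apply, he0, Pi.basisFun_repr, hb, Module.Basis.coe_mk]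
  have hKK' : K * K' = 1 := Module.Basis.toMatrix_mul_toMatrix_flip e0 b
  have hK'K : K' * K = 1 := Module.Basis.toMatrix_mul_toMatrix_flip b e0
  have hcardI : Fintype.card (Σ l, Fin (d l)) = N := by
    rw [Fintype.card_sigma]
    simp only [Fintype.card_fin]
    exact hsum
  have hrN : r ≤ N := by
    rw [← hsum]
    calc r = ∑ _l : Fin r, 1 := by simp
      _ ≤ ∑ l, d l := Finset.sum_le_sum (fun l _ => hd l)
  have hNcast : ((∑ l, d l : ℕ) : ℝ) = ∑ l, (d l : ℝ) := by push_cast; rfl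
  constructor
  · -- ============ g part ============
    set ε : (Σ l, Fin (d l)) → ℝ :=
      fun x => σ x.1 * (if 2*(x.2:ℕ) < d x.1 then 1 else -1) with hεdef
    have hgrep : g = K * blk d (fun l u v => σ l * dd (u+v+1) (d l)) * Kᵀ := by
      rw [hg]
      exact rep_g d σ k K hK
    have hval : ∀ x, ε x = 1 ∨ ε x = -1 ∨ ε x = 0 := by
      intro x
      rw [hεdef]; dsimp only
      rcases hσ x.1 with h | h <;> rw [h] <;> split_ifs <;> norm_num
    obtain ⟨eqv, heqv, hcards⟩ := sort_lemma N hcardI ε hval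
    set pos := Fintype.card {x // ε x = 1} with hposdef
    set neg := Fintype.card {x // ε x = -1} with hnegdef
    have hzer : Fintype.card {x // ε x = 0} = 0 := by
      rw [Fintype.card_eq_zero_iff]
      refine ⟨fun ⟨x, hx⟩ => ?_⟩
      rw [hεdef] at hx; dsimp only at hx
      rcases hσ x.1 with h | h <;> rw [h] at hx <;> split_ifs at hx <;> norm_num at hx
    have hpn : pos + neg = N := by omega
    -- count per block
    have hcount : ∀ l : Fin r,
        (2 * (((univ : Finset (Fin (d l))).filter (fun ν => ε ⟨l, ν⟩ = 1)).card : ℝ))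
          = (d l : ℝ) + (if d l % 2 = 1 then σ l else 0) := by
      intro l
      rcases hσ l with h | h
      · have hc : ((univ : Finset (Fin (d l))).filter (fun ν => ε ⟨l, ν⟩ = 1)).card
            = min ((d l + 1)/2) (d l) - 0 := by
          apply count_pred (d l) 0 ((d l + 1)/2)
            (fun u => σ l * (if 2*u < d l then 1 else -1) = 1)
          intro x _
          rw [h]; split_ifs <;> (try norm_num) <;> omega
        by_cases hp2 : d l % 2 = 1
        · rw [if_pos hp2, h]
          have h2 : 2 * (((univ : Finset (Fin (d l))).filter (fun ν => ε ⟨l, ν⟩ = 1)).card)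
              = d l + 1 := by omega
          have h2' := congrArg (Nat.cast : ℕ → ℝ) h2
          push_cast at h2'
          linarith
        · rw [if_neg hp2]
          have h2 : 2 * (((univ : Finset (Fin (d l))).filter (fun ν => ε ⟨l, ν⟩ = 1)).card)
              = d l := by omega
          have h2' := congrArg (Nat.cast : ℕ → ℝ) h2
          push_cast at h2'
          linarith
      · have hc : ((univ : Finset (Fin (d l))).filter (fun ν => ε ⟨l, ν⟩ = 1)).card
            = min (d l) (d l) - ((d l + 1)/2) := by
          apply count_pred (d l) ((d l + 1)/2) (d l)
            (fun u => σ l * (if 2*u < d l then 1 else -1) = 1)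
          intro x hx
          rw [h]; split_ifs <;> (try norm_num) <;> omega
        by_cases hp2 : d l % 2 = 1
        · rw [if_pos hp2, h]
          have h2 : 2 * (((univ : Finset (Fin (d l))).filter (fun ν => ε ⟨l, ν⟩ = 1)).card) + 1
              = d l := by omega
          have h2' := congrArg (Nat.cast : ℕ → ℝ) h2
          push_cast at h2'
          linarith
        · rw [if_neg hp2]
          have h2 : 2 * (((univ : Finset (Fin (d l))).filter (fun ν => ε ⟨l, ν⟩ = 1)).card)
              = d l := by omega
          have h2' := congrArg (Nat.cast : ℕ → ℝ) h2
          push_cast at h2'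
          linarith
    have hposform : (2 * pos : ℝ)
        = N + (∑ l ∈ Finset.univ.filter (fun l => d l % 2 = 1), σ l) := by
      rw [hposdef, count_sigma d (fun x => ε x = 1)]
      push_cast
      rw [Finset.mul_sum]
      rw [Finset.sum_congr rfl (fun l _ => hcount l), Finset.sum_add_distrib]
      rw [← hNcast, hsum, Finset.sum_filter]
    have hnegform : (2 * neg : ℝ)
        = N - (∑ l ∈ Finset.univ.filter (fun l => d l % 2 = 1), σ l) := by
      have h1 : (pos : ℝ) + neg = N := by exact_mod_cast hpn
      linarith
    have hf : ∀ i : Fin N, ε (eqv.symm i) = if (i:ℕ) < pos then 1 else -1 := by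
      intro i
      rw [heqv i]
      have hi := i.2
      split_ifs with h1 h2
      · rfl
      · rfl
      · omega
    obtain ⟨P, hPdet, hPcong⟩ := assemble g K K'
      (blk d (fun l u v => σ l * dd (u+v+1) (d l))) (blk d (fun l => cg (d l)))
      ε (fun i => if (i:ℕ) < pos then 1 else -1)
      hKK' hK'K hgrep (CG_orth d) (CG_diag d σ hσ) eqv hf
    exact ⟨P, pos, neg, hPdet, hpn, hposform, hnegform, hPcong⟩
  · -- ============ Q part ============
    set ε : (Σ l, Fin (d l)) → ℝ :=
      fun x => σ x.1 * (if (x.2:ℕ) = 0 then 0 else if 2*(x.2:ℕ) ≤ d x.1 then 1 else -1) with hεdef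
    have hQrep : Q = K * blk d (fun l u v => σ l * dd (u+v) (d l)) * Kᵀ := by
      rw [hQ]
      exact rep_Q d σ k hd K hK
    have hval : ∀ x, ε x = 1 ∨ ε x = -1 ∨ ε x = 0 := by
      intro x
      rw [hεdef]; dsimp only
      rcases hσ x.1 with h | h <;> rw [h] <;> split_ifs <;> norm_num
    obtain ⟨eqv, heqv, hcards⟩ := sort_lemma N hcardI ε hval
    set pos := Fintype.card {x // ε x = 1} with hposdef
    set neg := Fintype.card {x // ε x = -1} with hnegdef
    have hzer : Fintype.card {x // ε x = 0} = r := by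
      rw [count_sigma d (fun x => ε x = 0)]
      have h1 : ∀ l : Fin r,
          ((univ : Finset (Fin (d l))).filter (fun ν => ε ⟨l, ν⟩ = 0)).card = 1 := by
        intro l
        have hc : ((univ : Finset (Fin (d l))).filter (fun ν => ε ⟨l, ν⟩ = 0)).card
            = min 1 (d l) - 0 := by
          apply count_pred (d l) 0 1
            (fun u => σ l * (if u = 0 then 0 else if 2*u ≤ d l then 1 else -1) = 0)
          intro x _
          rcases hσ l with h | h <;> rw [h] <;> split_ifs <;> (try norm_num) <;> omega
        have := hd l
        omega
      rw [Finset.sum_congr rfl (fun l _ => h1 l)]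
      simp
    have hpn : pos + neg = N - r := by omega
    have hcount : ∀ l : Fin r,
        (2 * (((univ : Finset (Fin (d l))).filter (fun ν => ε ⟨l, ν⟩ = 1)).card : ℝ))
          = ((d l : ℝ) - 1) + (if d l % 2 = 0 then σ l else 0) := by
      intro l
      have hdl := hd l
      rcases hσ l with h | h
      · have hc : ((univ : Finset (Fin (d l))).filter (fun ν => ε ⟨l, ν⟩ = 1)).card
            = min (d l / 2 + 1) (d l) - 1 := by
          apply count_pred (d l) 1 (d l / 2 + 1)
            (fun u => σ l * (if u = 0 then 0 else if 2*u ≤ d l then 1 else -1) = 1)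
          intro x _
          rw [h]; split_ifs <;> (try norm_num) <;> omega
        by_cases hp2 : d l % 2 = 0
        · rw [if_pos hp2, h]
          have h2 : 2 * (((univ : Finset (Fin (d l))).filter (fun ν => ε ⟨l, ν⟩ = 1)).card)
              = d l := by omega
          have h2' := congrArg (Nat.cast : ℕ → ℝ) h2
          push_cast at h2'
          linarith
        · rw [if_neg hp2]
          have h2 : 2 * (((univ : Finset (Fin (d l))).filter (fun ν => ε ⟨l, ν⟩ = 1)).card) + 1
              = d l := by omega
          have h2' := congrArg (Nat.cast : ℕ → ℝ) h2
          push_cast at h2'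
          linarith
      · have hc : ((univ : Finset (Fin (d l))).filter (fun ν => ε ⟨l, ν⟩ = 1)).card
            = min (d l) (d l) - (d l / 2 + 1) := by
          apply count_pred (d l) (d l / 2 + 1) (d l)
            (fun u => σ l * (if u = 0 then 0 else if 2*u ≤ d l then 1 else -1) = 1)
          intro x _
          rw [h]; split_ifs <;> (try norm_num) <;> omega
        by_cases hp2 : d l % 2 = 0
        · rw [if_pos hp2, h]
          have h2 : 2 * (((univ : Finset (Fin (d l))).filter (fun ν => ε ⟨l, ν⟩ = 1)).card) + 2
              = d l := by omega
          have h2' := congrArg (Nat.cast : ℕ → ℝ) h2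
          push_cast at h2'
          linarith
        · rw [if_neg hp2]
          have h2 : 2 * (((univ : Finset (Fin (d l))).filter (fun ν => ε ⟨l, ν⟩ = 1)).card) + 1
              = d l := by omega
          have h2' := congrArg (Nat.cast : ℕ → ℝ) h2
          push_cast at h2'
          linarith
    have hNr : ((N - r : ℕ) : ℝ) = (N : ℝ) - r := by
      rw [Nat.cast_sub hrN]
    have hposform : (2 * pos : ℝ)
        = ((N - r : ℕ) : ℝ) + (∑ l ∈ Finset.univ.filter (fun l => d l % 2 = 0), σ l) := by
      rw [hposdef, count_sigma d (fun x => ε x = 1)]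
      push_cast
      rw [Finset.mul_sum]
      rw [Finset.sum_congr rfl (fun l _ => hcount l), Finset.sum_add_distrib]
      rw [hNr, Finset.sum_filter]
      have h3 : ∑ l, ((d l : ℝ) - 1) = (N : ℝ) - r := by
        rw [Finset.sum_sub_distrib, ← hNcast, hsum]
        simp
      rw [h3]
    have hnegform : (2 * neg : ℝ)
        = ((N - r : ℕ) : ℝ) - (∑ l ∈ Finset.univ.filter (fun l => d l % 2 = 0), σ l) := by
      have h1 : (pos : ℝ) + neg = ((N - r : ℕ) : ℝ) := by exact_mod_cast hpn
      linarith
    obtain ⟨P, hPdet, hPcong⟩ := assemble Q K K'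
      (blk d (fun l u v => σ l * dd (u+v) (d l))) (blk d (fun l => cq (d l)))
      ε (fun i => if (i:ℕ) < pos then 1 else if (i:ℕ) < pos + neg then -1 else 0)
      hKK' hK'K hQrep (CQ_orth d) (CQ_diag d σ hσ) eqv heqv
    exact ⟨P, pos, neg, hPdet, hpn, hposform, hnegform, hPcong⟩
end

section
/- Let T be a bilinear form on ℝ^N of pure boost weight zero with respect to a null frame, i.e. its only possibly nonzero null-frame components are T_{01}, T_{10} and T_{ij} (spatial i, j). If the two scalar invariants T^{(2)}_{ac} T^{(2)ac} and T_{ab} T^{ba} both vanish, where T^{(2)}_{ac} = T_{ab} T_c{}^{b} and indices are raised with η, then T = 0. (Contrapositive: a nonzero rank-2 tensor of pure boost weight zero possesses a non-vanishing scalar invariant.) -/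
open Matrix

/-! Null-frame formalism: we work with the components of tensors with respect to a
null frame `e_0 = ℓ, e_1 = n, e_2 = m_2, …, e_{N−1} = m_{N−1}` for the Minkowski
form `η` on `ℝ^N` (so `η(ℓ,n) = 1`, `η(m_i,m_j) = δ_{ij}`, all other frame products
vanish).  `ηnf N` is the matrix of frame components `η_{AB}`, and `ηup N = (ηnf N)⁻¹`
is the matrix of the inverse-metric components `η^{AB}` used to raise indices.
Spatial indices are those `i : Fin N` with `2 ≤ i`. -/

/-- Frame components `η_{AB}` of the Minkowski form in a null frame. -/
def ηnf (N : ℕ) : Matrix (Fin N) (Fin N) ℝ :=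
  Matrix.of fun A B =>
    if ((A : ℕ) = 0 ∧ (B : ℕ) = 1) ∨ ((A : ℕ) = 1 ∧ (B : ℕ) = 0) then 1
    else if A = B ∧ 2 ≤ (A : ℕ) then 1 else 0

/-- Components `η^{AB}` of the inverse metric in a null frame. -/
noncomputable def ηup (N : ℕ) : Matrix (Fin N) (Fin N) ℝ := (ηnf N)⁻¹

/-- The boost weight of a null-frame index: `+1` for the index `0` (the `ℓ` slot),
`−1` for the index `1` (the `n` slot), `0` for spatial indices. -/
def bw {N : ℕ} (A : Fin N) : ℤ :=
  if (A : ℕ) = 0 then 1 else if (A : ℕ) = 1 then -1 else 0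


/-- The square of a rank-2 tensor with one index raised:
`T⁽²⁾_{ac} = T_{ab} T_c{}^b = T_{ab} η^{bb'} T_{cb'}`. -/
noncomputable def sq2 (N : ℕ) (T : Fin N → Fin N → ℝ) : Fin N → Fin N → ℝ :=
  fun a c => ∑ b, ∑ b', T a b * ηup N b b' * T c b'

def sw {N : ℕ} (h : 2 ≤ N) (A : Fin N) : Fin N :=
  if (A : ℕ) = 0 then ⟨1, h⟩ else if (A : ℕ) = 1 then ⟨0, by omega⟩ else A

lemma sw_val {N : ℕ} (h : 2 ≤ N) (A : Fin N) :
    ((sw h A : Fin N) : ℕ) = if (A : ℕ) = 0 then 1 else if (A : ℕ) = 1 then 0 else (A : ℕ) := by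
  unfold sw; split_ifs <;> rfl

lemma sw_invol {N : ℕ} (h : 2 ≤ N) (A : Fin N) : sw h (sw h A) = A := by
  apply Fin.ext; simp only [sw_val]; split_ifs <;> simp_all

lemma sw_spatial {N : ℕ} (h : 2 ≤ N) (A : Fin N) (hA : 2 ≤ (A : ℕ)) : sw h A = A := by
  unfold sw; rw [if_neg, if_neg] <;> omega

lemma eta_apply {N : ℕ} (h : 2 ≤ N) (A B : Fin N) :
    ηnf N A B = if B = sw h A then 1 else 0 := by
  simp only [ηnf, sw, Matrix.of_apply]
  split_ifs <;>
    first
      | rfl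
      | (exfalso; simp only [Fin.ext_iff, Fin.val_mk] at *; omega)

lemma eta_mul {N : ℕ} (h : 2 ≤ N) : ηnf N * ηnf N = 1 := by
  ext A B
  rw [Matrix.mul_apply]
  simp only [eta_apply h, ite_mul, one_mul, zero_mul]
  simp [Finset.sum_ite_eq', sw_invol h, Matrix.one_apply, eq_comm]

lemma etaup_eq {N : ℕ} (h : 2 ≤ N) : ηup N = ηnf N := by
  rw [ηup]; exact Matrix.inv_eq_right_inv (eta_mul h)

/-- **Lemma 12** (`lemmapureb0`): a bilinear form `T` on `ℝ^N` of pure boost weight zero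
with respect to a null frame (only `T_{01}`, `T_{10}`, `T_{ij}` possibly nonzero, i.e.
all components of nonzero boost weight vanish) whose scalar invariants
`T⁽²⁾_{ac} T⁽²⁾ᵃᶜ` and `T_{ab} Tᵇᵃ` both vanish must be zero.  (Contrapositive: a
nonzero rank-2 tensor of pure boost weight zero has a non-vanishing invariant.) -/
theorem rank2_pure_bw_zero_vsi (N : ℕ) (hN : 2 ≤ N)
    (T : Fin N → Fin N → ℝ)
    (hbw : ∀ a b : Fin N, bw a + bw b ≠ 0 → T a b = 0)
    (h1 : (∑ a, ∑ c, ∑ a', ∑ c',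
      sq2 N T a c * ηup N a a' * ηup N c c' * sq2 N T a' c') = 0)
    (h2 : (∑ a, ∑ b, ∑ a', ∑ b',
      T a b * ηup N a a' * ηup N b b' * T b' a') = 0) :
    ∀ a b, T a b = 0 := by
  have hη : ∀ b b' : Fin N, ηup N b b' = if b' = sw hN b then 1 else 0 := by
    intro b b'; rw [etaup_eq hN, eta_apply hN]
  -- T vanishes off the allowed support
  have hbw' : ∀ a b : Fin N,
      ¬(((a : ℕ) = 0 ∧ (b : ℕ) = 1) ∨ ((a : ℕ) = 1 ∧ (b : ℕ) = 0) ∨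
        (2 ≤ (a : ℕ) ∧ 2 ≤ (b : ℕ))) → T a b = 0 := by
    intro a b h
    apply hbw
    unfold bw
    split_ifs <;> omega
  have hTsupp : ∀ a b : Fin N, T a b ≠ 0 →
      (((a : ℕ) = 0 ∧ (b : ℕ) = 1) ∨ ((a : ℕ) = 1 ∧ (b : ℕ) = 0) ∨
        (2 ≤ (a : ℕ) ∧ 2 ≤ (b : ℕ))) := by
    intro a b h
    by_contra hc
    exact h (hbw' a b hc)
  -- collapse the metric contractions
  have hsq : ∀ a c, sq2 N T a c = ∑ b, T a b * T c (sw hN b) := by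
    intro a c
    unfold sq2
    refine Finset.sum_congr rfl fun b _ => ?_
    simp [hη, mul_ite, ite_mul, Finset.sum_ite_eq']
  have h1' : (∑ a : Fin N, ∑ c,
      (∑ b, T a b * T c (sw hN b)) *
        (∑ b, T (sw hN a) b * T (sw hN c) (sw hN b))) = 0 := by
    rw [← h1]
    refine Finset.sum_congr rfl fun a _ => Finset.sum_congr rfl fun c _ => ?_
    simp only [hsq]
    simp [hη, mul_ite, ite_mul, Finset.sum_ite_eq', Finset.mul_sum]
  have h2' : (∑ a : Fin N, ∑ b, T a b * T (sw hN b) (sw hN a)) = 0 := by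
    rw [← h2]
    refine Finset.sum_congr rfl fun a _ => Finset.sum_congr rfl fun b _ => ?_
    simp [hη, mul_ite, ite_mul, Finset.sum_ite_eq', Finset.mul_sum]
  -- support of S
  have Sgen : ∀ a c : Fin N,
      ¬(((a : ℕ) = 0 ∧ (c : ℕ) = 1) ∨ ((a : ℕ) = 1 ∧ (c : ℕ) = 0) ∨
        (2 ≤ (a : ℕ) ∧ 2 ≤ (c : ℕ))) →
      (∑ b, T a b * T c (sw hN b)) = 0 := by
    intro a c hac
    apply Finset.sum_eq_zero
    intro b _
    by_cases hb : T a b = 0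
    · rw [hb, zero_mul]
    · have hs := hTsupp a b hb
      have hc : T c (sw hN b) = 0 := by
        apply hbw'
        rw [sw_val hN]
        split_ifs <;> simp <;> omega
      rw [hc, mul_zero]
  -- evaluation of S on the null block
  have Sval01 : ∀ a c : Fin N, (a : ℕ) = 0 → (c : ℕ) = 1 →
      (∑ b, T a b * T c (sw hN b)) = T a c * T c a := by
    intro a c ha hc
    rw [Finset.sum_eq_single c]
    · have hsw : sw hN c = a := by
        apply Fin.ext; rw [sw_val hN]; split_ifs <;> omega
      rw [hsw]
    · intro b _ hbc
      have : T a b = 0 := by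
        apply hbw'
        have : (b : ℕ) ≠ (c : ℕ) := fun h => hbc (Fin.ext h)
        omega
      rw [this, zero_mul]
    · intro h
      exact absurd (Finset.mem_univ c) h
  have Sval10 : ∀ a c : Fin N, (a : ℕ) = 1 → (c : ℕ) = 0 →
      (∑ b, T a b * T c (sw hN b)) = T a c * T c a := by
    intro a c ha hc
    rw [Finset.sum_eq_single c]
    · have hsw : sw hN c = a := by
        apply Fin.ext; rw [sw_val hN]; split_ifs <;> omega
      rw [hsw]
    · intro b _ hbc
      have : T a b = 0 := by
        apply hbw'
        have : (b : ℕ) ≠ (c : ℕ) := fun h => hbc (Fin.ext h)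
        omega
      rw [this, zero_mul]
    · intro h
      exact absurd (Finset.mem_univ c) h
  -- each summand of h1' is nonnegative
  have Fnonneg : ∀ a c : Fin N,
      0 ≤ (∑ b, T a b * T c (sw hN b)) *
        (∑ b, T (sw hN a) b * T (sw hN c) (sw hN b)) := by
    intro a c
    by_cases hac : ((a : ℕ) = 0 ∧ (c : ℕ) = 1) ∨ ((a : ℕ) = 1 ∧ (c : ℕ) = 0) ∨
        (2 ≤ (a : ℕ) ∧ 2 ≤ (c : ℕ))
    · rcases hac with ⟨ha, hc⟩ | ⟨ha, hc⟩ | ⟨ha, hc⟩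
      · rw [Sval01 a c ha hc, Sval10 (sw hN a) (sw hN c)
            (by rw [sw_val hN]; split_ifs <;> omega)
            (by rw [sw_val hN]; split_ifs <;> omega)]
        have hswa : sw hN a = c := by apply Fin.ext; rw [sw_val hN]; split_ifs <;> omega
        have hswc : sw hN c = a := by apply Fin.ext; rw [sw_val hN]; split_ifs <;> omega
        rw [hswa, hswc]
        nlinarith [sq_nonneg (T a c * T c a)]
      · rw [Sval10 a c ha hc, Sval01 (sw hN a) (sw hN c)
            (by rw [sw_val hN]; split_ifs <;> omega)
            (by rw [sw_val hN]; split_ifs <;> omega)]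
        have hswa : sw hN a = c := by apply Fin.ext; rw [sw_val hN]; split_ifs <;> omega
        have hswc : sw hN c = a := by apply Fin.ext; rw [sw_val hN]; split_ifs <;> omega
        rw [hswa, hswc]
        nlinarith [sq_nonneg (T a c * T c a)]
      · rw [sw_spatial hN a ha, sw_spatial hN c hc]
        exact mul_self_nonneg _
    · rw [Sgen a c hac, zero_mul]
  -- all summands of h1' vanish
  have key : ∀ a c : Fin N,
      (∑ b, T a b * T c (sw hN b)) *
        (∑ b, T (sw hN a) b * T (sw hN c) (sw hN b)) = 0 := by
    intro a c
    have houter := (Finset.sum_eq_zero_iff_of_nonneg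
      (fun a _ => Finset.sum_nonneg fun c _ => Fnonneg a c)).mp h1' a (Finset.mem_univ a)
    exact (Finset.sum_eq_zero_iff_of_nonneg
      (fun c _ => Fnonneg a c)).mp houter c (Finset.mem_univ c)
  -- spatial rows of T vanish
  have hTspat : ∀ a b : Fin N, 2 ≤ (a : ℕ) → T a b = 0 := by
    intro a b ha
    have hFa := key a a
    rw [sw_spatial hN a ha] at hFa
    have hSaa : (∑ b, T a b * T a (sw hN b)) = 0 := mul_self_eq_zero.mp hFa
    have hterm : ∀ b : Fin N, T a b * T a (sw hN b) = T a b * T a b := by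
      intro b
      by_cases hb : 2 ≤ (b : ℕ)
      · rw [sw_spatial hN b hb]
      · have h0 : T a b = 0 := hbw' a b (by omega)
        rw [h0, zero_mul, zero_mul]
    rw [Finset.sum_congr rfl fun b _ => hterm b] at hSaa
    exact mul_self_eq_zero.mp ((Finset.sum_eq_zero_iff_of_nonneg
      (fun b _ => mul_self_nonneg (T a b))).mp hSaa b (Finset.mem_univ b))
  -- only the null-block components remain
  have hfin : ∀ a b : Fin N,
      ¬(((a : ℕ) = 0 ∧ (b : ℕ) = 1) ∨ ((a : ℕ) = 1 ∧ (b : ℕ) = 0)) → T a b = 0 := by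
    intro a b h
    by_cases ha : 2 ≤ (a : ℕ)
    · exact hTspat a b ha
    · exact hbw' a b (by omega)
  -- second invariant kills the null block
  have hterm2 : ∀ a b : Fin N, T a b * T (sw hN b) (sw hN a) = T a b * T a b := by
    intro a b
    by_cases h : ((a : ℕ) = 0 ∧ (b : ℕ) = 1) ∨ ((a : ℕ) = 1 ∧ (b : ℕ) = 0)
    · have hswb : sw hN b = a := by
        apply Fin.ext; rw [sw_val hN]; rcases h with ⟨ha, hb⟩ | ⟨ha, hb⟩ <;> split_ifs <;> omega
      have hswa : sw hN a = b := by
        apply Fin.ext; rw [sw_val hN]; rcases h with ⟨ha, hb⟩ | ⟨ha, hb⟩ <;> split_ifs <;> omega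
      rw [hswb, hswa]
    · rw [hfin a b h, zero_mul, zero_mul]
  rw [Finset.sum_congr rfl fun a _ =>
    Finset.sum_congr rfl fun b _ => hterm2 a b] at h2'
  intro a b
  have houter := (Finset.sum_eq_zero_iff_of_nonneg
    (fun a _ => Finset.sum_nonneg fun b _ => mul_self_nonneg (T a b))).mp h2' a (Finset.mem_univ a)
  exact mul_self_eq_zero.mp ((Finset.sum_eq_zero_iff_of_nonneg
    (fun b _ => mul_self_nonneg (T a b))).mp houter b (Finset.mem_univ b))
end
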